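/- arXiv:1411.0021 — 3 statements merged into one kernel-verified Lean document; each statement's English description precedes it below -/
import Mathlib

section
/- Let Λ : [1,∞) → ℂ be continuous with |Λ(k)| ≤ C₀ k^{−5/2}, let v ∈ ℝ, φ(τ) = √(τ²+1) + vτ, and Ψ(k,t) = ∫₀^k e^{itφ(τ)} dτ. Then there is a constant C, depending only on C₀, such that ∫₁^t |Ψ(k,t) Λ(k)| dk ≤ C t^{−1/2} for all t ≥ 1, uniformly in v. -/
open MeasureTheory Complex Filter

noncomputable section
namespace MSW

def ff (τ : ℝ) : ℝ := τ / Real.sqrt (τ^2+1)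
def gd (τ : ℝ) : ℝ := (Real.sqrt (τ^2+1)^3)⁻¹
def g (v τ : ℝ) : ℝ := ff τ + v
def E (v t τ : ℝ) : ℂ := Complex.exp (Complex.I * t * (Real.sqrt (τ ^ 2 + 1) + v * τ))

lemma s_pos (τ : ℝ) : 0 < Real.sqrt (τ^2+1) := Real.sqrt_pos.2 (by positivity)
lemma s_sq (τ : ℝ) : Real.sqrt (τ^2+1)^2 = τ^2+1 := Real.sq_sqrt (by positivity)
lemma gd_pos (τ : ℝ) : 0 < gd τ := inv_pos.2 (pow_pos (s_pos τ) 3)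

lemma hasDerivAt_s (τ : ℝ) : HasDerivAt (fun x => Real.sqrt (x^2+1)) (ff τ) τ := by
  have h1 : HasDerivAt (fun x : ℝ => x^2+1) (2*τ) τ := by
    simpa using ((hasDerivAt_pow 2 τ).add_const 1)
  have h2 := (Real.hasDerivAt_sqrt (x := τ^2+1) (by positivity)).comp τ h1
  refine h2.congr_deriv ?_
  unfold ff; field_simp

lemma hasDerivAt_ff (τ : ℝ) : HasDerivAt ff (gd τ) τ := by
  have hs := s_pos τ
  have h1 : HasDerivAt (fun x : ℝ => x) 1 τ := hasDerivAt_id τ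
  have h2 := h1.div (hasDerivAt_s τ) hs.ne'
  refine h2.congr_deriv ?_
  unfold gd ff
  have hsq := s_sq τ
  field_simp
  nlinarith [hsq, sq_nonneg (Real.sqrt (τ^2+1))]

lemma hasDerivAt_g (v τ : ℝ) : HasDerivAt (g v) (gd τ) τ := by
  exact (hasDerivAt_ff τ).add_const v

lemma ff_mono : StrictMono ff :=
  strictMono_of_deriv_pos (fun τ => by rw [(hasDerivAt_ff τ).deriv]; exact gd_pos τ)

lemma g_mono (v : ℝ) : StrictMono (g v) :=
  strictMono_of_deriv_pos (fun τ => by rw [(hasDerivAt_g v τ).deriv]; exact gd_pos τ)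

lemma ff_lt_one (τ : ℝ) : ff τ < 1 := by
  have hs := s_pos τ
  rw [ff, div_lt_one hs]
  calc τ ≤ |τ| := le_abs_self τ
    _ = Real.sqrt (τ^2) := (Real.sqrt_sq_eq_abs τ).symm
    _ < Real.sqrt (τ^2+1) := Real.sqrt_lt_sqrt (sq_nonneg τ) (by linarith)

lemma gd_anti {p q : ℝ} (h0 : 0 ≤ p) (hpq : p ≤ q) : gd q ≤ gd p := by
  unfold gd
  have h1 : Real.sqrt (p^2+1) ≤ Real.sqrt (q^2+1) :=
    Real.sqrt_le_sqrt (by nlinarith)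
  exact inv_anti₀ (pow_pos (s_pos p) 3) (pow_le_pow_left₀ (s_pos p).le h1 3)

lemma ff_gap {p q : ℝ} (h0 : 0 ≤ p) (hpq : p ≤ q) : gd q * (q - p) ≤ ff q - ff p := by
  have hmono : MonotoneOn (fun x => ff x - gd q * x) (Set.Icc p q) := by
    apply monotoneOn_of_deriv_nonneg (convex_Icc p q)
    · exact (Continuous.continuousOn (by
        have : Continuous ff := by
          apply Continuous.div continuous_id (by fun_prop)
          exact fun x => (s_pos x).ne'
        fun_prop))
    · intro x hx
      exact ((hasDerivAt_ff x).sub ((hasDerivAt_id x).const_mul (gd q))).differentiableAt.differentiableWithinAt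
    · intro x hx
      rw [interior_Icc] at hx
      have := ((hasDerivAt_ff x).sub (by simpa using (hasDerivAt_id x).const_mul (gd q))).deriv
      rw [show deriv (fun x => ff x - gd q * x) x = gd x - gd q from this]
      have := gd_anti (le_trans h0 hx.1.le) hx.2.le
      linarith
  have := hmono (Set.left_mem_Icc.2 hpq) (Set.right_mem_Icc.2 hpq) hpq
  simp only at this
  nlinarith

lemma ff_nonneg {τ : ℝ} (h : 0 ≤ τ) : 0 ≤ ff τ := div_nonneg h (s_pos τ).le

lemma E_cont (v t : ℝ) : Continuous (E v t) := by
  unfold E; fun_prop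

lemma E_norm (v t τ : ℝ) : ‖E v t τ‖ = 1 := by
  rw [E, Complex.norm_exp]
  simp

lemma E_intInt (v t a b : ℝ) : IntervalIntegrable (E v t) volume a b :=
  (E_cont v t).intervalIntegrable a b

lemma hasDerivAt_E (v t τ : ℝ) :
    HasDerivAt (E v t) (Complex.I * t * (g v τ) * E v t τ) τ := by
  have hφ : HasDerivAt (fun τ => Real.sqrt (τ^2+1) + v*τ) (g v τ) τ := by
    exact ((hasDerivAt_s τ).add ((hasDerivAt_id τ).const_mul v)).congr_deriv (by simp [g])
  have h2 : HasDerivAt (fun τ : ℝ => ((Real.sqrt (τ^2+1) + v*τ : ℝ) : ℂ)) ((g v τ : ℝ) : ℂ) τ :=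
    hφ.ofReal_comp
  have h3 := (h2.const_mul (Complex.I * t)).cexp
  have hE : E v t = fun τ : ℝ => Complex.exp (Complex.I * t * ((Real.sqrt (τ^2+1) + v*τ : ℝ) : ℂ)) := by
    funext x; rw [E]; push_cast; ring_nf
  rw [hE]
  convert h3 using 1
  push_cast; ring

lemma g_cont (v : ℝ) : Continuous (g v) := by
  unfold g ff
  exact (Continuous.div continuous_id (by fun_prop) (fun x => (s_pos x).ne')).add continuous_const

lemma gd_cont : Continuous gd := by
  unfold gd
  exact Continuous.inv₀ (by fun_prop) (fun x => (pow_pos (s_pos x) 3).ne')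

/-- First-derivative van der Corput bound for our phase. -/
lemma vdc1 {v t a b lam : ℝ} (ht : 0 < t) (hab : a ≤ b) (hlam : 0 < lam)
    (hside : (∀ τ ∈ Set.Icc a b, lam ≤ g v τ) ∨ (∀ τ ∈ Set.Icc a b, g v τ ≤ -lam)) :
    ‖∫ τ in a..b, E v t τ‖ ≤ 3 / (t * lam) := by
  have htlam : 0 < t * lam := mul_pos ht hlam
  have hg0 : ∀ τ ∈ Set.Icc a b, g v τ ≠ 0 := by
    intro τ hτ
    rcases hside with h | h
    · exact (lt_of_lt_of_le hlam (h τ hτ)).ne'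
    · exact (lt_of_le_of_lt (h τ hτ) (by linarith)).ne
  have habs : ∀ τ ∈ Set.Icc a b, lam ≤ |g v τ| := by
    intro τ hτ
    rcases hside with h | h
    · rw [abs_of_pos (lt_of_lt_of_le hlam (h τ hτ))]; exact h τ hτ
    · rw [abs_of_neg (lt_of_le_of_lt (h τ hτ) (by linarith))]; linarith [h τ hτ]
  set c : ℂ := Complex.I * t with hc
  have hcne : c ≠ 0 :=
    mul_ne_zero Complex.I_ne_zero (by exact_mod_cast ht.ne')
  have hcnorm : ‖c‖ = t := by
    rw [hc, norm_mul, Complex.norm_I, one_mul, Complex.norm_real, Real.norm_eq_abs,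
      abs_of_pos ht]
  set F : ℝ → ℂ := fun τ => E v t τ / (c * (g v τ : ℂ)) with hF
  set D : ℝ → ℂ := fun τ => E v t τ * (gd τ : ℂ) / (c * (g v τ : ℂ)^2) with hD
  have huIcc : Set.uIcc a b = Set.Icc a b := Set.uIcc_of_le hab
  have hderiv : ∀ τ ∈ Set.uIcc a b, HasDerivAt F (E v t τ - D τ) τ := by
    intro τ hτ
    rw [huIcc] at hτ
    have hgne : (g v τ : ℂ) ≠ 0 := by exact_mod_cast hg0 τ hτ
    have hcg : HasDerivAt (fun x => c * (g v x : ℂ)) (c * (gd τ : ℂ)) τ :=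
      ((hasDerivAt_g v τ).ofReal_comp).const_mul c
    have h := (hasDerivAt_E v t τ).div hcg (mul_ne_zero hcne hgne)
    rw [hF, hD]
    refine h.congr_deriv ?_
    have hE1 : Complex.I * (t : ℂ) * (g v τ : ℂ) * E v t τ = c * (g v τ : ℂ) * E v t τ := by
      rw [hc]
    field_simp
    ring
  have hDcont : ContinuousOn D (Set.Icc a b) := by
    rw [hD]
    apply ContinuousOn.div
    · exact ((E_cont v t).mul (Complex.continuous_ofReal.comp gd_cont)).continuousOn
    · exact (continuous_const.mul ((Complex.continuous_ofReal.comp (g_cont v)).pow 2)).continuousOn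
    · intro τ hτ
      exact mul_ne_zero hcne (pow_ne_zero 2 (by exact_mod_cast hg0 τ hτ))
  have hDint : IntervalIntegrable D volume a b := (huIcc ▸ hDcont).intervalIntegrable
  have hint2 : IntervalIntegrable (fun τ => E v t τ - D τ) volume a b :=
    (E_intInt v t a b).sub hDint
  have hFTC := intervalIntegral.integral_eq_sub_of_hasDerivAt hderiv hint2
  rw [intervalIntegral.integral_sub (E_intInt v t a b) hDint] at hFTC
  have hkey : ∫ τ in a..b, E v t τ = (F b - F a) + ∫ τ in a..b, D τ := by
    linear_combination hFTC
  have hFbound : ∀ x ∈ Set.Icc a b, ‖F x‖ ≤ 1 / (t * lam) := by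
    intro x hx
    have h1 : t * lam ≤ t * |g v x| := by
      have := habs x hx; nlinarith
    have h2 : ‖F x‖ = 1 / (t * |g v x|) := by
      rw [hF]
      simp only
      rw [norm_div, E_norm, norm_mul, hcnorm, Complex.norm_real, Real.norm_eq_abs]
    rw [h2]
    exact one_div_le_one_div_of_le htlam h1
  -- bound for the D integral
  have hGder : ∀ x ∈ Set.uIcc a b,
      HasDerivAt (fun x => -(g v x)⁻¹/t) (gd x/(t*(g v x)^2)) x := by
    intro x hx; rw [huIcc] at hx
    have h := (((hasDerivAt_g v x).inv (hg0 x hx)).neg).div_const t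
    refine h.congr_deriv ?_
    field_simp
  have hbcont : ContinuousOn (fun x => gd x/(t*(g v x)^2)) (Set.Icc a b) := by
    apply ContinuousOn.div gd_cont.continuousOn (continuous_const.mul ((g_cont v).pow 2)).continuousOn
    intro x hx; exact mul_ne_zero ht.ne' (pow_ne_zero 2 (hg0 x hx))
  have hbint : IntervalIntegrable (fun x => gd x/(t*(g v x)^2)) volume a b :=
    (huIcc ▸ hbcont).intervalIntegrable
  have hGFTC := intervalIntegral.integral_eq_sub_of_hasDerivAt hGder hbint
  have hDb : ‖∫ τ in a..b, D τ‖ ≤ 1 / (t * lam) := by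
    have h1 : ‖∫ τ in a..b, D τ‖ ≤ |∫ τ in a..b, gd τ/(t*(g v τ)^2)| := by
      apply intervalIntegral.norm_integral_le_abs_of_norm_le _ hbint
      refine (MeasureTheory.ae_restrict_iff' measurableSet_uIoc).2 (Filter.Eventually.of_forall ?_)
      intro τ hτ
      have hτ' : τ ∈ Set.Icc a b := by
        rw [Set.uIoc_of_le hab] at hτ; exact ⟨le_of_lt hτ.1, hτ.2⟩
      rw [hD]
      simp only
      rw [norm_div, norm_mul, E_norm, one_mul, Complex.norm_real, Real.norm_eq_abs,
        norm_mul, hcnorm, norm_pow, Complex.norm_real, Real.norm_eq_abs,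
        abs_of_pos (gd_pos τ), _root_.sq_abs]
    have h2 : (0:ℝ) ≤ ∫ τ in a..b, gd τ/(t*(g v τ)^2) := by
      apply intervalIntegral.integral_nonneg hab
      intro u hu
      have := gd_pos u
      positivity
    rw [_root_.abs_of_nonneg h2, hGFTC] at h1
    refine h1.trans ?_
    have key : (g v a)⁻¹ - (g v b)⁻¹ ≤ lam⁻¹ := by
      have hamem : a ∈ Set.Icc a b := Set.left_mem_Icc.2 hab
      have hbmem : b ∈ Set.Icc a b := Set.right_mem_Icc.2 hab
      rcases hside with h | h
      · have ha : lam ≤ g v a := h a hamem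
        have hb : lam ≤ g v b := h b hbmem
        have h3 : (g v a)⁻¹ ≤ lam⁻¹ := inv_anti₀ hlam ha
        have h4 : 0 < (g v b)⁻¹ := inv_pos.2 (lt_of_lt_of_le hlam hb)
        linarith
      · have ha : g v a ≤ -lam := h a hamem
        have hb : g v b ≤ -lam := h b hbmem
        have h3 : (g v a)⁻¹ < 0 := inv_neg''.2 (by linarith)
        have h4 : (-(g v b))⁻¹ ≤ lam⁻¹ := inv_anti₀ hlam (by linarith)
        rw [inv_neg] at h4
        linarith
    have h5 : -(g v b)⁻¹ / t - -(g v a)⁻¹ / t = ((g v a)⁻¹ - (g v b)⁻¹)/t := by ring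
    rw [h5]
    calc ((g v a)⁻¹ - (g v b)⁻¹)/t ≤ lam⁻¹/t := by gcongr
      _ = 1/(t*lam) := by rw [one_div, mul_inv, div_eq_mul_inv, mul_comm]
  calc ‖∫ τ in a..b, E v t τ‖ = ‖(F b - F a) + ∫ τ in a..b, D τ‖ := by rw [hkey]
    _ ≤ ‖F b - F a‖ + ‖∫ τ in a..b, D τ‖ := norm_add_le _ _
    _ ≤ (‖F b‖ + ‖F a‖) + ‖∫ τ in a..b, D τ‖ := by
        have := norm_sub_le (F b) (F a); linarith
    _ ≤ (1/(t*lam) + 1/(t*lam)) + 1/(t*lam) := by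
        have h1 := hFbound a (Set.left_mem_Icc.2 hab)
        have h2 := hFbound b (Set.right_mem_Icc.2 hab)
        linarith [hDb]
    _ = 3/(t*lam) := by ring

/-- Second-derivative van der Corput bound for our phase. -/
lemma vdc2 {v t a b lam : ℝ} (ht : 0 < t) (hab : a ≤ b) (hlam : 0 < lam)
    (hgd : ∀ τ ∈ Set.Icc a b, lam ≤ gd τ) :
    ‖∫ τ in a..b, E v t τ‖ ≤ 8 / Real.sqrt (t * lam) := by
  have htlam : 0 < t * lam := mul_pos ht hlam
  have hsq : Real.sqrt (t*lam) * Real.sqrt (t*lam) = t*lam := Real.mul_self_sqrt htlam.le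
  have hsqpos : 0 < Real.sqrt (t*lam) := Real.sqrt_pos.2 htlam
  set δ : ℝ := (Real.sqrt (t*lam))⁻¹ with hδdef
  have hδ : 0 < δ := inv_pos.2 hsqpos
  have hld : 0 < lam * δ := mul_pos hlam hδ
  have ht1 : t * (lam * δ) = Real.sqrt (t*lam) := by
    rw [hδdef]
    field_simp
    nlinarith [Real.mul_self_sqrt ht.le, Real.mul_self_sqrt hlam.le]
  have key0 : 3 / (t * (lam * δ)) = 3 / Real.sqrt (t*lam) := by rw [ht1]
  have key0' : 3 / (t * (lam * δ)) ≤ 8 / Real.sqrt (t*lam) := by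
    rw [key0]; gcongr; norm_num
  -- monotonicity-type facts
  have hmvt : ∀ p ∈ Set.Icc a b, ∀ q ∈ Set.Icc a b, p ≤ q →
      lam * (q - p) ≤ g v q - g v p := by
    intro p hp q hq hpq
    have hmono : MonotoneOn (fun x => g v x - lam * x) (Set.Icc a b) := by
      apply monotoneOn_of_deriv_nonneg (convex_Icc a b)
      · exact ((g_cont v).sub (continuous_const.mul continuous_id)).continuousOn
      · intro x hx
        exact ((hasDerivAt_g v x).sub ((hasDerivAt_id x).const_mul lam)).differentiableAt.differentiableWithinAt
      · intro x hx
        rw [interior_Icc] at hx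
        have hd := ((hasDerivAt_g v x).sub (by simpa using (hasDerivAt_id x).const_mul lam)).deriv
        rw [show deriv (fun x => g v x - lam * x) x = gd x - lam from hd]
        have := hgd x ⟨hx.1.le, hx.2.le⟩
        linarith
    have := hmono hp hq hpq
    simp only at this
    nlinarith
  by_cases h1 : lam*δ ≤ g v a
  · refine le_trans (vdc1 ht hab hld (Or.inl ?_)) key0'
    intro τ hτ
    exact h1.trans (((g_mono v).monotone hτ.1))
  by_cases h2 : g v b ≤ -(lam*δ)
  · refine le_trans (vdc1 ht hab hld (Or.inr ?_)) key0'
    intro τ hτ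
    exact le_trans ((g_mono v).monotone hτ.2) h2
  push_neg at h1 h2
  -- construct p
  have hp : ∃ p, p ∈ Set.Icc a b ∧ -(lam*δ) ≤ g v p ∧
      (p = a ∨ g v p = -(lam*δ)) ∧ ‖∫ τ in a..p, E v t τ‖ ≤ 3 / Real.sqrt (t*lam) := by
    rcases le_or_gt (-(lam*δ)) (g v a) with hga | hga
    · refine ⟨a, Set.left_mem_Icc.2 hab, hga, Or.inl rfl, ?_⟩
      simp [intervalIntegral.integral_same]
      positivity
    · have hmem : -(lam*δ) ∈ Set.Icc (g v a) (g v b) := ⟨hga.le, h2.le⟩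
      obtain ⟨p, hpmem, hgp⟩ := intermediate_value_Icc hab (g_cont v).continuousOn hmem
      refine ⟨p, hpmem, hgp.ge, Or.inr hgp, ?_⟩
      rw [← key0]
      apply vdc1 ht hpmem.1 hld (Or.inr ?_)
      intro τ hτ
      have : g v τ ≤ g v p := (g_mono v).monotone hτ.2
      rw [hgp] at this; exact this
  have hq : ∃ q, q ∈ Set.Icc a b ∧ g v q ≤ lam*δ ∧
      (q = b ∨ g v q = lam*δ) ∧ ‖∫ τ in q..b, E v t τ‖ ≤ 3 / Real.sqrt (t*lam) := by
    rcases le_or_gt (g v b) (lam*δ) with hgb | hgb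
    · refine ⟨b, Set.right_mem_Icc.2 hab, hgb, Or.inl rfl, ?_⟩
      simp [intervalIntegral.integral_same]
      positivity
    · have hmem : lam*δ ∈ Set.Icc (g v a) (g v b) := ⟨h1.le, hgb.le⟩
      obtain ⟨q, hqmem, hgq⟩ := intermediate_value_Icc hab (g_cont v).continuousOn hmem
      refine ⟨q, hqmem, hgq.le, Or.inr hgq, ?_⟩
      rw [← key0]
      apply vdc1 ht hqmem.2 hld (Or.inl ?_)
      intro τ hτ
      have : g v q ≤ g v τ := (g_mono v).monotone hτ.1
      rw [hgq] at this; exact this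
  obtain ⟨p, hpmem, hgp, hpd, hIp⟩ := hp
  obtain ⟨q, hqmem, hgq, hqd, hIq⟩ := hq
  have hpq : p ≤ q := by
    rcases hpd with rfl | hpd
    · exact hqmem.1
    · rcases hqd with rfl | hqd
      · exact hpmem.2
      · have : g v p < g v q := by rw [hpd, hqd]; linarith
        exact ((g_mono v).lt_iff_lt.1 this).le
  have hwidth : q - p ≤ 2*δ := by
    have := hmvt p hpmem q hqmem hpq
    have h3 : g v q - g v p ≤ 2*(lam*δ) := by linarith
    nlinarith
  have hmid : ‖∫ τ in p..q, E v t τ‖ ≤ 2*δ := by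
    have := intervalIntegral.norm_integral_le_of_norm_le_const
      (C := 1) (f := E v t) (a := p) (b := q) (fun x _ => le_of_eq (E_norm v t x))
    rw [one_mul, _root_.abs_of_nonneg (by linarith)] at this
    linarith
  have hsplit : ∫ τ in a..b, E v t τ =
      (∫ τ in a..p, E v t τ) + (∫ τ in p..q, E v t τ) + (∫ τ in q..b, E v t τ) := by
    rw [intervalIntegral.integral_add_adjacent_intervals (E_intInt v t a p) (E_intInt v t p q),
      intervalIntegral.integral_add_adjacent_intervals (E_intInt v t a q) (E_intInt v t q b)]
  have h2δ : 2*δ = 2 / Real.sqrt (t*lam) := by rw [hδdef]; ring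
  calc ‖∫ τ in a..b, E v t τ‖
      ≤ ‖∫ τ in a..p, E v t τ‖ + ‖∫ τ in p..q, E v t τ‖ + ‖∫ τ in q..b, E v t τ‖ := by
        rw [hsplit]; exact (norm_add_le _ _).trans (by gcongr; exact norm_add_le _ _)
    _ ≤ 3 / Real.sqrt (t*lam) + 2*δ + 3 / Real.sqrt (t*lam) := by
        gcongr
    _ = 8 / Real.sqrt (t*lam) := by rw [h2δ]; ring

lemma gd_ge {k τ : ℝ} (hk : 1 ≤ k) (hτ : τ^2 ≤ k^2) : (3*k^3)⁻¹ ≤ gd τ := by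
  unfold gd
  have hk0 : (0:ℝ) < k := by linarith
  apply inv_anti₀ (pow_pos (s_pos τ) 3)
  set s := Real.sqrt (τ^2+1) with hs
  have hs0 : 0 ≤ s := Real.sqrt_nonneg _
  have hs2 : s^2 = τ^2+1 := s_sq τ
  have h1 : s^2 ≤ 2*k^2 := by nlinarith
  have h2 : s ≤ 1.5*k := by nlinarith [sq_nonneg (s - 1.5*k)]
  calc s^3 = s * s^2 := by ring
    _ ≤ 1.5*k * (2*k^2) := by nlinarith
    _ = 3*k^3 := by ring

lemma P_le (v t k : ℝ) (ht : 0 < t) (hk : 1 ≤ k) :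
    ‖∫ τ in (0:ℝ)..k, E v t τ‖ ≤ 14 * Real.sqrt (k^3) / Real.sqrt t := by
  have hk0 : (0:ℝ) < k := by linarith
  have hst : 0 < Real.sqrt t := Real.sqrt_pos.2 ht
  have h : ‖∫ τ in (0:ℝ)..k, E v t τ‖ ≤ 8 / Real.sqrt (t * (3*k^3)⁻¹) := by
    apply vdc2 ht (by linarith) (by positivity)
    intro τ hτ
    exact gd_ge hk (by nlinarith [hτ.1, hτ.2])
  refine h.trans ?_
  have e1 : Real.sqrt (t * (3*k^3)⁻¹) = Real.sqrt t / Real.sqrt (3*k^3) := by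
    rw [show t*(3*k^3)⁻¹ = t/(3*k^3) by ring, Real.sqrt_div ht.le]
  rw [e1, div_div_eq_mul_div]
  have h3 : Real.sqrt 3 ≤ 7/4 := by
    calc Real.sqrt 3 ≤ Real.sqrt ((7/4)^2) := Real.sqrt_le_sqrt (by norm_num)
      _ = 7/4 := Real.sqrt_sq (by norm_num)
  have h4 : Real.sqrt (3*k^3) = Real.sqrt 3 * Real.sqrt (k^3) := Real.sqrt_mul (by norm_num) _
  have hnum : 8 * Real.sqrt (3*k^3) ≤ 14 * Real.sqrt (k^3) := by
    rw [h4]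
    nlinarith [mul_nonneg (show (0:ℝ) ≤ 14 - 8*Real.sqrt 3 by linarith) (Real.sqrt_nonneg (k^3))]
  exact (div_le_div_iff_of_pos_right hst).2 hnum

lemma tail {v t lam m k : ℝ} (ht : 0 < t) (hlam : 0 < lam) (hmk : m ≤ k)
    (hside : (∀ τ ∈ Set.Icc m k, lam ≤ g v τ) ∨ (∀ τ ∈ Set.Icc m k, g v τ ≤ -lam)) :
    ‖∫ τ in (0:ℝ)..k, E v t τ‖ ≤ ‖∫ τ in (0:ℝ)..m, E v t τ‖ + 3/(t*lam) := by
  have hsplit : ∫ τ in (0:ℝ)..k, E v t τ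
      = (∫ τ in (0:ℝ)..m, E v t τ) + ∫ τ in m..k, E v t τ :=
    (intervalIntegral.integral_add_adjacent_intervals (E_intInt v t 0 m) (E_intInt v t m k)).symm
  rw [hsplit]
  exact (norm_add_le _ _).trans (add_le_add le_rfl (vdc1 ht hmk hlam hside))

lemma claimA {v t k : ℝ} (ht : 1 ≤ t) (hk : 1 ≤ k)
    (hside : (∀ τ ∈ Set.Icc 1 k, (24*k^2)⁻¹ ≤ g v τ) ∨
      (∀ τ ∈ Set.Icc 1 k, g v τ ≤ -(24*k^2)⁻¹)) :
    ‖∫ τ in (0:ℝ)..k, E v t τ‖ ≤ 14/Real.sqrt t + 72*k^2/t := by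
  have ht0 : 0 < t := by linarith
  have hk0 : (0:ℝ) < k := by linarith
  have h1 := tail (v:=v) ht0 (show (0:ℝ) < (24*k^2)⁻¹ by positivity) hk hside
  have h2 := P_le v t 1 ht0 le_rfl
  have h2' : ‖∫ τ in (0:ℝ)..(1:ℝ), E v t τ‖ ≤ 14/Real.sqrt t := by
    simpa using h2
  have h3 : 3/(t*(24*k^2)⁻¹) = 72*k^2/t := by field_simp; ring
  rw [h3] at h1
  linarith

lemma ff_one_half : 1/2 ≤ ff 1 := by
  have h : Real.sqrt ((1:ℝ)^2+1) ≤ 2 := by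
    calc Real.sqrt ((1:ℝ)^2+1) ≤ Real.sqrt (2^2) := Real.sqrt_le_sqrt (by norm_num)
      _ = 2 := Real.sqrt_sq (by norm_num)
  have hs := s_pos 1
  rw [ff, le_div_iff₀ hs]
  norm_num at h ⊢
  nlinarith [Real.sq_sqrt (show (0:ℝ) ≤ 2 by norm_num), Real.sqrt_nonneg 2]

lemma sideA_vpos {v k : ℝ} (hv : 0 ≤ v) (hk : 1 ≤ k) :
    ∀ τ ∈ Set.Icc (1:ℝ) k, (24*k^2)⁻¹ ≤ g v τ := by
  intro τ hτ
  have h1 : ff 1 ≤ ff τ := ff_mono.monotone hτ.1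
  have h2 : (24*k^2)⁻¹ ≤ 1/2 := by
    rw [show (1:ℝ)/2 = (2:ℝ)⁻¹ by norm_num]
    exact inv_anti₀ (by norm_num) (by nlinarith)
  unfold g
  linarith [ff_one_half]

lemma ff_le_one_sub {k : ℝ} (hk : 1 ≤ k) : ff k ≤ 1 - (4*k^2)⁻¹ := by
  set s := Real.sqrt (k^2+1) with hsdef
  have hs0 : 0 < s := s_pos k
  have hs2 : s^2 = k^2+1 := s_sq k
  have hk0 : (0:ℝ) < k := by linarith
  have hsle : s ≤ 1.5*k := by nlinarith [sq_nonneg (s - 1.5*k)]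
  have hsk : k < s := by nlinarith
  set u : ℝ := 4*k^2 with hudef
  have hu : (0:ℝ) < u := by positivity
  have key : s*(s+k) ≤ u := by nlinarith
  have hdiff : (s-k)*(s+k) = 1 := by nlinarith
  have h5 : s ≤ (s - k)*u := by
    nlinarith [mul_nonneg (show (0:ℝ) ≤ s - k by linarith) (show (0:ℝ) ≤ u - s*(s+k) by linarith)]
  rw [ff, div_le_iff₀ hs0]
  have h6 : ((1 - u⁻¹)*s - k)*u = s*u - s - k*u := by field_simp
  nlinarith [h5, h6, hu]

lemma sideA_vneg1 {v k : ℝ} (hv : v ≤ -1) (hk : 1 ≤ k) :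
    ∀ τ ∈ Set.Icc (1:ℝ) k, g v τ ≤ -(24*k^2)⁻¹ := by
  intro τ hτ
  have h1 : ff τ ≤ ff k := ff_mono.monotone hτ.2
  have h2 := ff_le_one_sub hk
  have h3 : (24*k^2)⁻¹ ≤ (4*k^2)⁻¹ := inv_anti₀ (by positivity) (by nlinarith)
  unfold g
  linarith

lemma side1 {v k : ℝ} (hk : 1 ≤ k) (hff : ff (2*k) ≤ -v) :
    ∀ τ ∈ Set.Icc (1:ℝ) k, g v τ ≤ -(24*k^2)⁻¹ := by
  intro τ hτ
  have hk0 : (0:ℝ) < k := by linarith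
  have h1 : ff τ ≤ ff k := ff_mono.monotone hτ.2
  have hgap : gd (2*k) * (2*k - k) ≤ ff (2*k) - ff k := ff_gap (by linarith) (by linarith)
  have hgd : (3*(2*k)^3)⁻¹ ≤ gd (2*k) := gd_ge (by linarith) le_rfl
  have h4 : (3*(2*k)^3)⁻¹ * (2*k - k) = (24*k^2)⁻¹ := by field_simp; ring
  have h5 : (24*k^2)⁻¹ ≤ ff (2*k) - ff k := by
    nlinarith [gd_pos (2*k)]
  unfold g
  linarith

lemma side3 {v τ₀ k : ℝ} (hτ₀ : 0 ≤ τ₀) (hv2 : -v ≤ ff τ₀) (hk : 2*τ₀+2 ≤ k) :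
    ∀ τ ∈ Set.Icc (2*τ₀+2) k, (6*(2*τ₀+2)^2)⁻¹ ≤ g v τ := by
  intro τ hτ
  set M : ℝ := 2*τ₀+2 with hM
  have hM1 : 1 ≤ M := by simp [hM]; linarith
  have hM0 : (0:ℝ) < M := by linarith
  have h1 : g v M ≤ g v τ := (g_mono v).monotone hτ.1
  have hgap : gd M * (M - τ₀) ≤ ff M - ff τ₀ := ff_gap hτ₀ (by simp [hM]; linarith)
  have hgd : (3*M^3)⁻¹ ≤ gd M := gd_ge hM1 le_rfl
  have h2 : M/2 ≤ M - τ₀ := by simp [hM]; linarith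
  have h3 : (3*M^3)⁻¹ * (M/2) = (6*M^2)⁻¹ := by field_simp; ring
  have h4 : (3*M^3)⁻¹ * (M/2) ≤ gd M * (M - τ₀) :=
    mul_le_mul hgd h2 (by positivity) (gd_pos M).le
  have h5 : (6*M^2)⁻¹ ≤ ff M - ff τ₀ := by rw [← h3]; exact h4.trans hgap
  have h6 : (6*M^2)⁻¹ ≤ g v M := by
    unfold g
    linarith
  linarith

lemma rpow_intInt {x y r : ℝ} (hx : 0 < x) (hxy : x ≤ y) :
    IntervalIntegrable (fun k : ℝ => k ^ r) volume x y := by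
  apply ContinuousOn.intervalIntegrable
  intro z hz
  rw [Set.uIcc_of_le hxy] at hz
  exact (Real.continuousAt_rpow_const z r (Or.inl (by linarith [hz.1]))).continuousWithinAt

lemma inv_intInt {x y : ℝ} (hx : 0 < x) (hxy : x ≤ y) :
    IntervalIntegrable (fun k : ℝ => k⁻¹) volume x y := by
  apply ContinuousOn.intervalIntegrable
  apply ContinuousOn.inv₀ continuousOn_id
  intro z hz
  rw [Set.uIcc_of_le hxy] at hz
  exact ne_of_gt (by simpa using lt_of_lt_of_le hx hz.1)

lemma int_rpow52 {x y : ℝ} (hx : 1 ≤ x) (hxy : x ≤ y) :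
    ∫ k in x..y, k ^ (-(5/2) : ℝ) ≤ (2/3) * x^(-(3/2):ℝ) := by
  have h := integral_rpow (a:=x) (b:=y) (r:=-(5/2))
    (Or.inr ⟨by norm_num, by rw [Set.uIcc_of_le hxy]; exact fun h => absurd h.1 (by linarith)⟩)
  rw [show (-(5/2:ℝ)+1) = -(3/2) by norm_num] at h
  rw [h]
  have hA : (0:ℝ) ≤ y ^ (-(3/2):ℝ) := Real.rpow_nonneg (by linarith) _
  linarith

lemma int_rpowhalf {x y : ℝ} (hx : 1 ≤ x) (hxy : x ≤ y) :
    ∫ k in x..y, k ^ (-(1/2) : ℝ) ≤ 2 * Real.sqrt y := by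
  have h := integral_rpow (a:=x) (b:=y) (r:=-(1/2)) (Or.inl (by norm_num))
  rw [show (-(1/2:ℝ)+1) = 1/2 by norm_num] at h
  rw [h]
  have e1 : y ^ ((1:ℝ)/2) = Real.sqrt y := (Real.sqrt_eq_rpow y).symm
  have e2 : x ^ ((1:ℝ)/2) = Real.sqrt x := (Real.sqrt_eq_rpow x).symm
  rw [show ((1:ℝ)/2) = (1/2 : ℝ) by norm_num] at e1 e2
  rw [e1, e2]
  have := Real.sqrt_nonneg x
  linarith [Real.sqrt_nonneg x]

lemma int_inv_le {x y : ℝ} (hx : 1 ≤ x) (hxy : x ≤ y) (h6 : y ≤ 6*x) :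
    ∫ k in x..y, k⁻¹ ≤ 2 := by
  rw [integral_inv (by rw [Set.uIcc_of_le hxy]; exact fun h => absurd h.1 (by linarith))]
  have hx0 : (0:ℝ) < x := by linarith
  have h1 : y / x ≤ 6 := (div_le_iff₀ hx0).2 (by linarith)
  have hyx0 : (0:ℝ) < y / x := div_pos (by linarith) (by linarith)
  have h2 : Real.log (y/x) ≤ Real.log 6 := Real.log_le_log hyx0 h1
  have h3 : Real.log 6 ≤ 2 := by
    have h4 := Real.exp_one_gt_d9
    have h5 : Real.exp 2 = Real.exp 1 * Real.exp 1 := by rw [← Real.exp_add]; norm_num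
    have he : (6:ℝ) < Real.exp 2 := by nlinarith
    calc Real.log 6 ≤ Real.log (Real.exp 2) := Real.log_le_log (by norm_num) he.le
      _ = 2 := Real.log_exp 2
  linarith

lemma e_sq_rpow {k : ℝ} (hk : 0 < k) : k^2 * k ^ (-(5/2):ℝ) = k ^ (-(1/2):ℝ) := by
  rw [show (k:ℝ)^2 = k^((2:ℕ):ℝ) from (Real.rpow_natCast k 2).symm, ← Real.rpow_add hk]
  norm_num

lemma e_sqrt3_rpow {k : ℝ} (hk : 0 < k) : Real.sqrt (k^3) * k ^ (-(5/2):ℝ) = k⁻¹ := by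
  rw [Real.sqrt_eq_rpow, show (k:ℝ)^3 = k^((3:ℕ):ℝ) from (Real.rpow_natCast k 3).symm,
    ← Real.rpow_mul hk.le, ← Real.rpow_add hk]
  norm_num
  rw [Real.rpow_neg_one]

lemma e_sqrt3_rpow' {k : ℝ} (hk : 0 < k) : Real.sqrt (k^3) * k ^ (-(3/2):ℝ) = 1 := by
  rw [Real.sqrt_eq_rpow, show (k:ℝ)^3 = k^((3:ℕ):ℝ) from (Real.rpow_natCast k 3).symm,
    ← Real.rpow_mul hk.le, ← Real.rpow_add hk]
  norm_num

lemma e_sq_rpow32 {k : ℝ} (hk : 0 < k) : k^2 * k ^ (-(3/2):ℝ) = Real.sqrt k := by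
  rw [show (k:ℝ)^2 = k^((2:ℕ):ℝ) from (Real.rpow_natCast k 2).symm, ← Real.rpow_add hk,
    Real.sqrt_eq_rpow]
  norm_num

lemma norm_intInt {v t : ℝ} {Λ : ℝ → ℂ} (hΛc : ContinuousOn Λ (Set.Ici 1))
    {x y : ℝ} (hx : 1 ≤ x) (hxy : x ≤ y) :
    IntervalIntegrable (fun k => ‖(∫ τ in (0:ℝ)..k, E v t τ) * Λ k‖) volume x y := by
  apply ContinuousOn.intervalIntegrable
  apply ContinuousOn.norm
  apply ContinuousOn.mul
  · exact (intervalIntegral.continuous_primitive (fun a b => E_intInt v t a b) 0).continuousOn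
  · apply hΛc.mono
    rw [Set.uIcc_of_le hxy]
    intro z hz
    exact le_trans hx hz.1

lemma regionA_int {C₀ v t : ℝ} {Λ : ℝ → ℂ} (hC₀ : 0 ≤ C₀)
    (hΛc : ContinuousOn Λ (Set.Ici 1))
    (hΛ : ∀ k : ℝ, 1 ≤ k → ‖Λ k‖ ≤ C₀ * k ^ (-(5/2 : ℝ))) (ht : 1 ≤ t)
    {x y : ℝ} (hx : 1 ≤ x) (hxy : x ≤ y) (hyt : y ≤ t)
    (hP : ∀ k ∈ Set.Icc x y, ‖∫ τ in (0:ℝ)..k, E v t τ‖ ≤ 14/Real.sqrt t + 72*k^2/t) :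
    ∫ k in x..y, ‖(∫ τ in (0:ℝ)..k, E v t τ) * Λ k‖ ≤ 154*C₀/Real.sqrt t := by
  have ht0 : (0:ℝ) < t := by linarith
  have hx0 : (0:ℝ) < x := by linarith
  set S := Real.sqrt t with hSdef
  have hS0 : 0 < S := Real.sqrt_pos.2 ht0
  have hSS : S*S = t := Real.mul_self_sqrt ht0.le
  have hmono : ∫ k in x..y, ‖(∫ τ in (0:ℝ)..k, E v t τ) * Λ k‖
      ≤ ∫ k in x..y, (14*C₀/S * k^(-(5/2):ℝ) + 72*C₀/t * k^(-(1/2):ℝ)) := by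
    apply intervalIntegral.integral_mono_on hxy (norm_intInt hΛc hx hxy)
      (((rpow_intInt hx0 hxy).const_mul _).add ((rpow_intInt hx0 hxy).const_mul _))
    intro k hk
    have hk1 : 1 ≤ k := le_trans hx hk.1
    have hk0 : (0:ℝ) < k := by linarith
    rw [norm_mul]
    have hkey : ‖∫ τ in (0:ℝ)..k, E v t τ‖ * ‖Λ k‖
        ≤ (14/S + 72*k^2/t) * (C₀ * k ^ (-(5/2):ℝ)) :=
      mul_le_mul (hP k hk) (hΛ k hk1) (norm_nonneg _) (by positivity)
    refine hkey.trans (le_of_eq ?_)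
    rw [← e_sq_rpow hk0]
    ring
  refine hmono.trans ?_
  rw [intervalIntegral.integral_add ((rpow_intInt hx0 hxy).const_mul _)
      ((rpow_intInt hx0 hxy).const_mul _),
    intervalIntegral.integral_const_mul, intervalIntegral.integral_const_mul]
  have h52 := int_rpow52 hx hxy
  have hx32 : x^(-(3/2):ℝ) ≤ 1 := Real.rpow_le_one_of_one_le_of_nonpos hx (by norm_num)
  have hhalf := int_rpowhalf hx hxy
  have hsy : Real.sqrt y ≤ S := Real.sqrt_le_sqrt hyt
  have hc1 : (0:ℝ) ≤ 14*C₀/S := by positivity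
  have hc2 : (0:ℝ) ≤ 72*C₀/t := by positivity
  have key : 14*C₀/S * (2/3) + 72*C₀/t * (2*S) ≤ 154*C₀/S := by
    have e : 72*C₀/t * (2*S) = 144*C₀/S := by
      rw [← hSS]; field_simp; ring
    rw [e, show 14*C₀/S*(2/3) + 144*C₀/S = (14*C₀*(2/3) + 144*C₀)/S by ring]
    exact (div_le_div_iff_of_pos_right hS0).2 (by linarith)
  calc 14*C₀/S * (∫ k in x..y, k^(-(5/2):ℝ)) + 72*C₀/t * (∫ k in x..y, k^(-(1/2):ℝ))
      ≤ 14*C₀/S * (2/3) + 72*C₀/t * (2*S) := by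
        apply add_le_add
        · exact mul_le_mul_of_nonneg_left (h52.trans (by linarith)) hc1
        · exact mul_le_mul_of_nonneg_left (hhalf.trans (by linarith)) hc2
    _ ≤ 154*C₀/S := key

lemma region2_int {C₀ v t : ℝ} {Λ : ℝ → ℂ} (hC₀ : 0 ≤ C₀)
    (hΛc : ContinuousOn Λ (Set.Ici 1))
    (hΛ : ∀ k : ℝ, 1 ≤ k → ‖Λ k‖ ≤ C₀ * k ^ (-(5/2 : ℝ))) (ht : 1 ≤ t)
    {x y : ℝ} (hx : 1 ≤ x) (hxy : x ≤ y) (h6 : y ≤ 6*x) :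
    ∫ k in x..y, ‖(∫ τ in (0:ℝ)..k, E v t τ) * Λ k‖ ≤ 28*C₀/Real.sqrt t := by
  have ht0 : (0:ℝ) < t := by linarith
  have hx0 : (0:ℝ) < x := by linarith
  set S := Real.sqrt t with hSdef
  have hS0 : 0 < S := Real.sqrt_pos.2 ht0
  have hmono : ∫ k in x..y, ‖(∫ τ in (0:ℝ)..k, E v t τ) * Λ k‖
      ≤ ∫ k in x..y, 14*C₀/S * k⁻¹ := by
    apply intervalIntegral.integral_mono_on hxy (norm_intInt hΛc hx hxy)
      ((inv_intInt hx0 hxy).const_mul _)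
    intro k hk
    have hk1 : 1 ≤ k := le_trans hx hk.1
    have hk0 : (0:ℝ) < k := by linarith
    rw [norm_mul]
    have hkey : ‖∫ τ in (0:ℝ)..k, E v t τ‖ * ‖Λ k‖
        ≤ (14*Real.sqrt (k^3)/S) * (C₀ * k ^ (-(5/2):ℝ)) :=
      mul_le_mul (P_le v t k ht0 hk1) (hΛ k hk1) (norm_nonneg _) (by positivity)
    refine hkey.trans (le_of_eq ?_)
    rw [← e_sqrt3_rpow hk0]
    ring
  refine hmono.trans ?_
  rw [intervalIntegral.integral_const_mul]
  have h2 := int_inv_le hx hxy h6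
  have hc1 : (0:ℝ) ≤ 14*C₀/S := by positivity
  calc 14*C₀/S * (∫ k in x..y, k⁻¹) ≤ 14*C₀/S * 2 := mul_le_mul_of_nonneg_left h2 hc1
    _ = 28*C₀/S := by ring

lemma region3_int {C₀ v t : ℝ} {Λ : ℝ → ℂ} (hC₀ : 0 ≤ C₀)
    (hΛc : ContinuousOn Λ (Set.Ici 1))
    (hΛ : ∀ k : ℝ, 1 ≤ k → ‖Λ k‖ ≤ C₀ * k ^ (-(5/2 : ℝ))) (ht : 1 ≤ t)
    {M : ℝ} (hM : 1 ≤ M) (hMt : M ≤ t)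
    (hP : ∀ k ∈ Set.Icc M t, ‖∫ τ in (0:ℝ)..k, E v t τ‖
      ≤ 14*Real.sqrt (M^3)/Real.sqrt t + 18*M^2/t) :
    ∫ k in M..t, ‖(∫ τ in (0:ℝ)..k, E v t τ) * Λ k‖ ≤ 22*C₀/Real.sqrt t := by
  have ht0 : (0:ℝ) < t := by linarith
  have hM0 : (0:ℝ) < M := by linarith
  set S := Real.sqrt t with hSdef
  have hS0 : 0 < S := Real.sqrt_pos.2 ht0
  have hSS : S*S = t := Real.mul_self_sqrt ht0.le
  set Q : ℝ := 14*Real.sqrt (M^3)/S + 18*M^2/t with hQdef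
  have hQ0 : 0 ≤ Q := by positivity
  have hmono : ∫ k in M..t, ‖(∫ τ in (0:ℝ)..k, E v t τ) * Λ k‖
      ≤ ∫ k in M..t, (C₀*Q) * k^(-(5/2):ℝ) := by
    apply intervalIntegral.integral_mono_on hMt (norm_intInt hΛc hM hMt)
      ((rpow_intInt hM0 hMt).const_mul _)
    intro k hk
    have hk1 : 1 ≤ k := le_trans hM hk.1
    rw [norm_mul]
    have hkey : ‖∫ τ in (0:ℝ)..k, E v t τ‖ * ‖Λ k‖ ≤ Q * (C₀ * k ^ (-(5/2):ℝ)) :=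
      mul_le_mul (hP k hk) (hΛ k hk1) (norm_nonneg _) (by positivity)
    refine hkey.trans (le_of_eq ?_)
    ring
  refine hmono.trans ?_
  rw [intervalIntegral.integral_const_mul]
  have h52 := int_rpow52 hM hMt
  have hM32 : (0:ℝ) ≤ M^(-(3/2):ℝ) := Real.rpow_nonneg hM0.le _
  have step1 : (C₀*Q) * (∫ k in M..t, k^(-(5/2):ℝ)) ≤ (C₀*Q) * ((2/3) * M^(-(3/2):ℝ)) :=
    mul_le_mul_of_nonneg_left h52 (by positivity)
  refine step1.trans ?_
  have expand : C₀*Q*((2/3)*M^(-(3/2):ℝ))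
      = (28/3)*C₀/S*(Real.sqrt (M^3)*M^(-(3/2):ℝ)) + 12*C₀/t*(M^2*M^(-(3/2):ℝ)) := by
    rw [hQdef]; ring
  rw [expand, e_sqrt3_rpow' hM0, e_sq_rpow32 hM0, mul_one]
  have hsM : Real.sqrt M ≤ S := Real.sqrt_le_sqrt hMt
  have h3 : 12*C₀/t*Real.sqrt M ≤ 12*C₀/S := by
    rw [← hSS, div_mul_eq_mul_div, div_le_div_iff₀ (by positivity) hS0]
    nlinarith [mul_nonneg (mul_nonneg (show (0:ℝ) ≤ 12*C₀ by linarith) hS0.le)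
      (sub_nonneg.2 hsM)]
  have h8 : 28/3*C₀/S + 12*C₀/S ≤ 22*C₀/S := by
    rw [show 28/3*C₀/S + 12*C₀/S = (28/3*C₀ + 12*C₀)/S by ring]
    exact (div_le_div_iff_of_pos_right hS0).2 (by linarith)
  linarith [h3, h8]

end MSW

open MSW in
/-- decay estimate of Lemma A.1: let `Λ` be continuous on `[1,∞)` with
`|Λ(k)| ≤ C₀ k^{−5/2}`, `φ(τ) = √(τ²+1) + vτ` and `Ψ(k,t) = ∫₀^k e^{itφ(τ)} dτ`.
Then `∫₁^t |Ψ(k,t)Λ(k)| dk ≤ C t^{−1/2}` for `t ≥ 1`, with `C` depending only on `C₀`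
(in particular uniformly in `v`). -/
theorem decay_estimate_MSW (C₀ : ℝ) (hC₀ : 0 ≤ C₀) :
    ∃ C : ℝ, ∀ (Λ : ℝ → ℂ) (v t : ℝ),
      ContinuousOn Λ (Set.Ici 1) →
      (∀ k : ℝ, 1 ≤ k → ‖Λ k‖ ≤ C₀ * k ^ (-(5 / 2 : ℝ))) →
      1 ≤ t →
      (∫ k in (1:ℝ)..t,
          ‖(∫ τ in (0:ℝ)..k,
              Complex.exp (Complex.I * t * (Real.sqrt (τ ^ 2 + 1) + v * τ))) * Λ k‖) ≤
        C * t ^ (-(1 / 2 : ℝ)) := by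
  refine ⟨300*C₀, ?_⟩
  intro Λ v t hΛc hΛ ht
  have ht0 : (0:ℝ) < t := by linarith
  have hS0 : 0 < Real.sqrt t := Real.sqrt_pos.2 ht0
  have hSS : Real.sqrt t * Real.sqrt t = t := Real.mul_self_sqrt ht0.le
  have hRHS : (300*C₀) * t ^ (-(1/2 : ℝ)) = 300*C₀/Real.sqrt t := by
    rw [Real.rpow_neg ht0.le, ← Real.sqrt_eq_rpow, div_eq_mul_inv]
  have hEq : (∫ k in (1:ℝ)..t,
      ‖(∫ τ in (0:ℝ)..k,
          Complex.exp (Complex.I * t * (Real.sqrt (τ ^ 2 + 1) + v * τ))) * Λ k‖)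
      = ∫ k in (1:ℝ)..t, ‖(∫ τ in (0:ℝ)..k, E v t τ) * Λ k‖ := rfl
  rw [hEq, hRHS]
  rcases le_or_gt v (-1) with hv | hv
  · refine le_trans (regionA_int hC₀ hΛc hΛ ht le_rfl ht le_rfl ?_)
      ((div_le_div_iff_of_pos_right hS0).2 (by linarith))
    intro k hk
    exact claimA ht hk.1 (Or.inr (sideA_vneg1 hv hk.1))
  · obtain ⟨τ₀, hτ₀0, hfτ₀, hfle⟩ :
        ∃ τ₀ : ℝ, 0 ≤ τ₀ ∧ -v ≤ ff τ₀ ∧ ∀ x, 1 ≤ x → x ≤ τ₀ → ff x ≤ -v := by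
      rcases le_or_gt 0 v with hv0 | hv0
      · refine ⟨0, le_rfl, ?_, ?_⟩
        · have h0 : ff 0 = 0 := by simp [ff]
          rw [h0]; linarith
        · intro x hx1 hx2
          exact absurd (hx1.trans hx2) (by norm_num)
      · have hv2 : v^2 < 1 := by nlinarith
        have h1v : 0 < 1 - v^2 := by linarith
        have hs0 : 0 < Real.sqrt (1-v^2) := Real.sqrt_pos.2 h1v
        have hsq : Real.sqrt (1-v^2)^2 = 1-v^2 := Real.sq_sqrt h1v.le
        have hffτ₀ : ff (-v / Real.sqrt (1-v^2)) = -v := by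
          unfold ff
          have e : (-v / Real.sqrt (1-v^2))^2 + 1 = ((Real.sqrt (1-v^2))⁻¹)^2 := by
            rw [div_pow]
            field_simp
            linarith [hsq]
          rw [e, Real.sqrt_sq (inv_nonneg.2 hs0.le)]
          field_simp
        refine ⟨-v / Real.sqrt (1-v^2), div_nonneg (by linarith) hs0.le, hffτ₀.ge, ?_⟩
        intro x hx1 hx2
        calc ff x ≤ ff (-v / Real.sqrt (1-v^2)) := ff_mono.monotone hx2
          _ = -v := hffτ₀
    set M : ℝ := 2*τ₀+2 with hMdef
    set A1 : ℝ := max 1 (τ₀/2) with hA1def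
    set a : ℝ := min t A1 with hadef
    set b : ℝ := min t M with hbdef
    have hA11 : 1 ≤ A1 := le_max_left _ _
    have hM1 : (1:ℝ) ≤ M := by rw [hMdef]; linarith
    have h1a : 1 ≤ a := le_min ht hA11
    have hA1M : A1 ≤ M := max_le (by rw [hMdef]; linarith) (by rw [hMdef]; linarith)
    have hab : a ≤ b := min_le_min le_rfl hA1M
    have hbt : b ≤ t := min_le_left _ _
    have hat : a ≤ t := min_le_left _ _
    have h1b : 1 ≤ b := h1a.trans hab
    have hb6a : b ≤ 6*a := by
      rcases le_total t A1 with h | h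
      · have ha' : a = t := by rw [hadef, min_eq_left h]
        rw [ha']; linarith [hbt]
      · have ha' : a = A1 := by rw [hadef, min_eq_right h]
        have hM6 : M ≤ 6*A1 := by
          rcases le_total τ₀ 2 with h2 | h2
          · have hM6' : M ≤ 6 := by rw [hMdef]; linarith
            linarith [hA11]
          · have h3 : τ₀/2 ≤ A1 := le_max_right _ _
            rw [hMdef]; linarith
        rw [ha']
        exact le_trans (min_le_right t M) hM6
    have hsplitJ : (∫ k in (1:ℝ)..t, ‖(∫ τ in (0:ℝ)..k, E v t τ) * Λ k‖)
        = (∫ k in (1:ℝ)..a, ‖(∫ τ in (0:ℝ)..k, E v t τ) * Λ k‖)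
        + (∫ k in a..b, ‖(∫ τ in (0:ℝ)..k, E v t τ) * Λ k‖)
        + (∫ k in b..t, ‖(∫ τ in (0:ℝ)..k, E v t τ) * Λ k‖) := by
      rw [intervalIntegral.integral_add_adjacent_intervals
          (norm_intInt hΛc le_rfl h1a) (norm_intInt hΛc h1a hab),
        intervalIntegral.integral_add_adjacent_intervals
          (norm_intInt hΛc le_rfl h1b) (norm_intInt hΛc h1b hbt)]
    have hR1 : (∫ k in (1:ℝ)..a, ‖(∫ τ in (0:ℝ)..k, E v t τ) * Λ k‖)
        ≤ 154*C₀/Real.sqrt t := by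
      apply regionA_int hC₀ hΛc hΛ ht le_rfl h1a hat
      intro k hk
      rcases le_or_gt (2*k) τ₀ with h2k | h2k
      · exact claimA ht hk.1 (Or.inr (side1 hk.1 (hfle (2*k) (by linarith [hk.1]) h2k)))
      · have hka : k ≤ A1 := le_trans hk.2 (min_le_right t A1)
        have hk1 : k = 1 := by
          refine le_antisymm ?_ hk.1
          by_contra h
          push_neg at h
          rcases le_max_iff.1 hka with h' | h'
          · linarith
          · linarith
        subst hk1
        have hP1 : ‖∫ τ in (0:ℝ)..(1:ℝ), E v t τ‖ ≤ 14/Real.sqrt t := by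
          simpa using P_le v t 1 ht0 le_rfl
        refine hP1.trans ?_
        have hnn : (0:ℝ) ≤ 72*(1:ℝ)^2/t := by positivity
        linarith
    have hR2 : (∫ k in a..b, ‖(∫ τ in (0:ℝ)..k, E v t τ) * Λ k‖)
        ≤ 28*C₀/Real.sqrt t :=
      region2_int hC₀ hΛc hΛ ht h1a hab hb6a
    have hR3 : (∫ k in b..t, ‖(∫ τ in (0:ℝ)..k, E v t τ) * Λ k‖)
        ≤ 22*C₀/Real.sqrt t := by
      rcases le_or_gt M t with hMt | hMt
      · have hb' : b = M := by rw [hbdef, min_eq_right hMt]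
        rw [hb']
        apply region3_int hC₀ hΛc hΛ ht hM1 hMt
        intro k hk
        have hMk : M ≤ k := hk.1
        have hside : ∀ τ ∈ Set.Icc M k, (6*M^2)⁻¹ ≤ g v τ :=
          side3 (v := v) (k := k) hτ₀0 hfτ₀ hMk
        have htail := tail (v:=v) ht0
          (show (0:ℝ) < (6*M^2)⁻¹ by positivity) hMk (Or.inl hside)
        have hPM : ‖∫ τ in (0:ℝ)..M, E v t τ‖ ≤ 14*Real.sqrt (M^3)/Real.sqrt t :=
          P_le v t M ht0 hM1
        have h3 : 3/(t*(6*M^2)⁻¹) = 18*M^2/t := by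
          have hM0 : (0:ℝ) < M := by linarith
          field_simp
          ring
        rw [h3] at htail
        exact htail.trans (by linarith)
      · have hb' : b = t := by rw [hbdef, min_eq_left hMt.le]
        rw [hb', intervalIntegral.integral_same]
        positivity
    rw [hsplitJ]
    have hfin : 154*C₀/Real.sqrt t + 28*C₀/Real.sqrt t + 22*C₀/Real.sqrt t
        ≤ 300*C₀/Real.sqrt t := by
      rw [show 154*C₀/Real.sqrt t + 28*C₀/Real.sqrt t + 22*C₀/Real.sqrt t
        = (204*C₀)/Real.sqrt t by ring]
      exact (div_le_div_iff_of_pos_right hS0).2 (by linarith)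
    linarith [hR1, hR2, hR3]
end
end

section
/- Let η : [1,∞) → ℂ be smooth with |η(k)| ≤ 1 and |η'(k)| ≤ k^{−1}, let m > 0, α > 3/2, and g ∈ 𝒜₁. Then there is a constant C = C(m, α) such that for all t ≥ 1, sup_{p ∈ ℝ} |∫₁^∞ η(k) k^{−α} e^{±it√(k²+m²) + ikp} g(k) dk| ≤ C ‖g‖_{𝒜₁} t^{−1/2}. -/
open MeasureTheory Complex Filter Set

noncomputable section

/-- `g ∈ 𝒜₁`: `g k = c + ∫ e^{ikp} gh(p) dp` with `c ∈ ℂ`, `gh ∈ L¹`;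
the `𝒜₁`-norm is `|c| + ∫‖gh‖`. -/
def WienerRep1 (g : ℝ → ℂ) (c : ℂ) (gh : ℝ → ℂ) : Prop :=
  Integrable gh ∧ ∀ k : ℝ, g k = c + ∫ p : ℝ, Complex.exp (Complex.I * k * p) * gh p


lemma normE (r : ℝ) : ‖Complex.exp (Complex.I * r)‖ = 1 := by
  rw [mul_comm, Complex.norm_exp_ofReal_mul_I]

theorem vdc1 (a b mu M : ℝ) (A A' : ℝ → ℂ) (ψ ψ' ψ'' : ℝ → ℝ)
    (hab : a ≤ b) (hmu : 0 < mu)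
    (hψd : ∀ k ∈ Icc a b, HasDerivAt ψ (ψ' k) k)
    (hψ'd : ∀ k ∈ Icc a b, HasDerivAt ψ' (ψ'' k) k)
    (hψ''c : ContinuousOn ψ'' (Icc a b))
    (hψ''nn : ∀ k ∈ Icc a b, 0 ≤ ψ'' k)
    (hmu' : ∀ k ∈ Icc a b, mu ≤ |ψ' k|)
    (hAc : ContinuousOn A (Icc a b)) (hA'c : ContinuousOn A' (Icc a b))
    (hAd : ∀ k ∈ Ioo a b, HasDerivAt A (A' k) k)
    (hM : ∀ k ∈ Icc a b, ‖A k‖ ≤ M) :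
    ‖∫ k in a..b, A k * Complex.exp (Complex.I * (ψ k : ℂ))‖ ≤
      (4 * M + ∫ k in a..b, ‖A' k‖) / mu := by
  have hM0 : 0 ≤ M := le_trans (norm_nonneg _) (hM a ⟨le_refl a, hab⟩)
  have hV0 : 0 ≤ ∫ k in a..b, ‖A' k‖ :=
    intervalIntegral.integral_nonneg hab (fun k _ => norm_nonneg _)
  set E : ℝ → ℂ := fun k => Complex.exp (Complex.I * (ψ k : ℂ)) with hE
  have hψne : ∀ k ∈ Icc a b, ψ' k ≠ 0 := fun k hk h0 => by
    have := hmu' k hk; rw [h0, abs_zero] at this; linarith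
  -- continuity facts
  have hψc : ContinuousOn ψ (Icc a b) := fun k hk =>
    (hψd k hk).continuousAt.continuousWithinAt
  have hψ'c : ContinuousOn ψ' (Icc a b) := fun k hk =>
    (hψ'd k hk).continuousAt.continuousWithinAt
  have hEc : ContinuousOn E (Icc a b) :=
    Complex.continuous_exp.comp_continuousOn
      ((Complex.continuous_ofReal.comp_continuousOn hψc).const_smul Complex.I)
  set J : ℝ → ℂ := fun k => -Complex.I * (((ψ' k)⁻¹ : ℝ) : ℂ) with hJ
  have hJc : ContinuousOn J (Icc a b) :=
    (Complex.continuous_ofReal.comp_continuousOn (hψ'c.inv₀ hψne)).const_smul (-Complex.I)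
  have hJnorm : ∀ k, ‖J k‖ = |ψ' k|⁻¹ := by
    intro k
    rw [hJ]
    rw [norm_mul, norm_neg, Complex.norm_I, one_mul, Complex.norm_real, Real.norm_eq_abs,
      abs_inv]
  set F : ℝ → ℂ := fun k => A k * E k * J k with hF
  set G : ℝ → ℂ := fun k =>
    A' k * E k * J k + A k * E k * Complex.I * ((ψ'' k / (ψ' k) ^ 2 : ℝ) : ℂ) with hG
  have hQc : ContinuousOn (fun k => ψ'' k / (ψ' k) ^ 2) (Icc a b) :=
    hψ''c.div (hψ'c.pow 2) (fun k hk => pow_ne_zero 2 (hψne k hk))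
  have hQi : IntervalIntegrable (fun k => ψ'' k / (ψ' k) ^ 2) volume a b :=
    (hQc.mono (by rw [uIcc_of_le hab])).intervalIntegrable
  have hGc : ContinuousOn G (Icc a b) := by
    apply ContinuousOn.add
    · exact (hA'c.mul hEc).mul hJc
    · exact ((hAc.mul hEc).mul continuousOn_const).mul
        (Complex.continuous_ofReal.comp_continuousOn hQc)
  have hFc : ContinuousOn F (Icc a b) := (hAc.mul hEc).mul hJc
  -- derivative of F
  have hFd : ∀ k ∈ Ioo a b, HasDerivAt F (A k * E k + G k) k := by
    intro k hk
    have hk' : k ∈ Icc a b := Ioo_subset_Icc_self hk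
    have hne : ψ' k ≠ 0 := hψne k hk'
    have hneC : (ψ' k : ℂ) ≠ 0 := Complex.ofReal_ne_zero.2 hne
    have h1 : HasDerivAt (fun x => Complex.I * (ψ x : ℂ)) (Complex.I * (ψ' k : ℂ)) k :=
      ((hψd k hk').ofReal_comp).const_mul Complex.I
    have hEd : HasDerivAt E (E k * (Complex.I * (ψ' k : ℂ))) k := h1.cexp
    have hJd : HasDerivAt J (-Complex.I * ((-ψ'' k / (ψ' k) ^ 2 : ℝ) : ℂ)) k :=
      (((hψ'd k hk').inv hne).ofReal_comp).const_mul (-Complex.I)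
    have := ((hAd k hk).mul hEd).mul hJd
    refine this.congr_deriv ?_
    symm
    simp only [Pi.mul_apply]
    rw [hG, hJ]
    push_cast
    field_simp
    ring_nf
    simp only [Complex.I_sq]
    ring
  have hAEc : ContinuousOn (fun k => A k * E k) (Icc a b) := hAc.mul hEc
  have hAEi : IntervalIntegrable (fun k => A k * E k) volume a b :=
    (hAEc.mono (by rw [uIcc_of_le hab])).intervalIntegrable
  have hGi : IntervalIntegrable G volume a b :=
    (hGc.mono (by rw [uIcc_of_le hab])).intervalIntegrable
  have hFTC : (∫ k in a..b, (A k * E k + G k)) = F b - F a := by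
    apply intervalIntegral.integral_eq_sub_of_hasDeriv_right_of_le hab hFc
      (fun x hx => (hFd x hx).hasDerivWithinAt)
    exact hAEi.add hGi
  have hsplit : (∫ k in a..b, A k * E k) = F b - F a - ∫ k in a..b, G k := by
    rw [← hFTC, intervalIntegral.integral_add hAEi hGi]; ring
  -- bound ‖F x‖
  have hFb : ∀ x ∈ Icc a b, ‖F x‖ ≤ M / mu := by
    intro x hx
    have h0 : ‖F x‖ = ‖A x‖ * ‖E x‖ * ‖J x‖ := by rw [hF, norm_mul, norm_mul]
    rw [h0, hE, normE, mul_one, hJnorm]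
    have h1 : |ψ' x|⁻¹ ≤ mu⁻¹ := inv_anti₀ hmu (hmu' x hx)
    calc ‖A x‖ * |ψ' x|⁻¹ ≤ M * mu⁻¹ :=
          mul_le_mul (hM x hx) h1 (inv_nonneg.2 (abs_nonneg _)) hM0
      _ = M / mu := by rw [div_eq_mul_inv]
  -- ∫ ψ''/ψ'²
  have hP : (∫ k in a..b, ψ'' k / (ψ' k) ^ 2) = (ψ' a)⁻¹ - (ψ' b)⁻¹ := by
    have hcont : ContinuousOn (fun k => -(ψ' k)⁻¹) (Icc a b) := (hψ'c.inv₀ hψne).neg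
    have hderiv : ∀ x ∈ Ioo a b, HasDerivWithinAt (fun k => -(ψ' k)⁻¹)
        (ψ'' x / (ψ' x) ^ 2) (Ioi x) x := by
      intro x hx
      have hx' : x ∈ Icc a b := Ioo_subset_Icc_self hx
      have := ((hψ'd x hx').inv (hψne x hx')).neg
      have h2 : -(-ψ'' x / ψ' x ^ 2) = ψ'' x / (ψ' x) ^ 2 := by ring
      rw [h2] at this
      exact this.hasDerivWithinAt
    have := intervalIntegral.integral_eq_sub_of_hasDeriv_right_of_le hab hcont hderiv hQi
    rw [this]; ring
  have hPle : (∫ k in a..b, ψ'' k / (ψ' k) ^ 2) ≤ 2 / mu := by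
    rw [hP]
    have h1 : |(ψ' a)⁻¹| ≤ mu⁻¹ := by
      rw [abs_inv]; exact inv_anti₀ hmu (hmu' a ⟨le_refl a, hab⟩)
    have h2 : |(ψ' b)⁻¹| ≤ mu⁻¹ := by
      rw [abs_inv]; exact inv_anti₀ hmu (hmu' b ⟨hab, le_refl b⟩)
    have h3 : (ψ' a)⁻¹ - (ψ' b)⁻¹ ≤ |(ψ' a)⁻¹| + |(ψ' b)⁻¹| :=
      le_trans (le_abs_self _) (abs_sub _ _)
    calc (ψ' a)⁻¹ - (ψ' b)⁻¹ ≤ mu⁻¹ + mu⁻¹ := le_trans h3 (add_le_add h1 h2)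
      _ = 2 / mu := by rw [div_eq_mul_inv]; ring
  -- bound ‖∫ G‖
  have hGbound : ‖∫ k in a..b, G k‖ ≤
      (∫ k in a..b, ‖A' k‖) / mu + M * (2 / mu) := by
    have hI1 : IntervalIntegrable (fun k => ‖A' k‖ * mu⁻¹) volume a b :=
      (((hA'c.norm.mul continuousOn_const : ContinuousOn (fun k => ‖A' k‖ * mu⁻¹)
        (Icc a b))).mono (by rw [uIcc_of_le hab])).intervalIntegrable
    have hI2 : IntervalIntegrable (fun k => M * (ψ'' k / (ψ' k) ^ 2)) volume a b :=
      hQi.const_mul M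
    have hbi : IntervalIntegrable (fun k => ‖A' k‖ * mu⁻¹ + M * (ψ'' k / (ψ' k) ^ 2))
        volume a b := hI1.add hI2
    have hptw : ∀ k ∈ Icc a b, ‖G k‖ ≤ ‖A' k‖ * mu⁻¹ + M * (ψ'' k / (ψ' k) ^ 2) := by
      intro k hk
      have h1 : ‖A' k * E k * J k‖ ≤ ‖A' k‖ * mu⁻¹ := by
        rw [norm_mul, norm_mul, hE, normE, mul_one, hJnorm]
        exact mul_le_mul_of_nonneg_left (inv_anti₀ hmu (hmu' k hk)) (norm_nonneg _)
      have h2 : ‖A k * E k * Complex.I * ((ψ'' k / (ψ' k) ^ 2 : ℝ) : ℂ)‖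
          ≤ M * (ψ'' k / (ψ' k) ^ 2) := by
        rw [norm_mul, norm_mul, norm_mul, hE, normE, mul_one, Complex.norm_I, mul_one,
          Complex.norm_real, Real.norm_eq_abs,
          _root_.abs_of_nonneg (div_nonneg (hψ''nn k hk) (sq_nonneg _))]
        exact mul_le_mul_of_nonneg_right (hM k hk)
          (div_nonneg (hψ''nn k hk) (sq_nonneg _))
      calc ‖G k‖ ≤ ‖A' k * E k * J k‖ +
            ‖A k * E k * Complex.I * ((ψ'' k / (ψ' k) ^ 2 : ℝ) : ℂ)‖ := norm_add_le _ _
        _ ≤ _ := add_le_add h1 h2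
    have h5 : ‖∫ k in a..b, G k‖ ≤
        |∫ k in a..b, (‖A' k‖ * mu⁻¹ + M * (ψ'' k / (ψ' k) ^ 2))| := by
      apply intervalIntegral.norm_integral_le_abs_of_norm_le _ hbi
      filter_upwards [ae_restrict_mem measurableSet_Ioc] with k hk
      rw [uIoc_of_le hab] at hk
      exact hptw k (Ioc_subset_Icc_self hk)
    have h6 : (∫ k in a..b, (‖A' k‖ * mu⁻¹ + M * (ψ'' k / (ψ' k) ^ 2))) =
        (∫ k in a..b, ‖A' k‖) * mu⁻¹ + M * ∫ k in a..b, ψ'' k / (ψ' k) ^ 2 := by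
      rw [intervalIntegral.integral_add hI1 hI2,
        intervalIntegral.integral_mul_const, intervalIntegral.integral_const_mul]
    have h7 : (∫ k in a..b, (‖A' k‖ * mu⁻¹ + M * (ψ'' k / (ψ' k) ^ 2))) ≤
        (∫ k in a..b, ‖A' k‖) / mu + M * (2 / mu) := by
      rw [h6, div_eq_mul_inv]
      exact add_le_add le_rfl (mul_le_mul_of_nonneg_left hPle hM0)
    have h8 : |∫ k in a..b, (‖A' k‖ * mu⁻¹ + M * (ψ'' k / (ψ' k) ^ 2))| =
        ∫ k in a..b, (‖A' k‖ * mu⁻¹ + M * (ψ'' k / (ψ' k) ^ 2)) := by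
      apply _root_.abs_of_nonneg
      apply intervalIntegral.integral_nonneg hab
      intro k hk
      exact le_trans (norm_nonneg _) (hptw k hk)
    rw [h8] at h5
    exact le_trans h5 h7
  rw [hsplit]
  calc ‖F b - F a - ∫ k in a..b, G k‖ ≤ ‖F b - F a‖ + ‖∫ k in a..b, G k‖ := norm_sub_le _ _
    _ ≤ (‖F b‖ + ‖F a‖) + ((∫ k in a..b, ‖A' k‖) / mu + M * (2 / mu)) :=
        add_le_add (norm_sub_le _ _) hGbound
    _ ≤ (M / mu + M / mu) + ((∫ k in a..b, ‖A' k‖) / mu + M * (2 / mu)) :=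
        add_le_add (add_le_add (hFb b ⟨hab, le_refl b⟩) (hFb a ⟨le_refl a, hab⟩)) le_rfl
    _ = (4 * M + ∫ k in a..b, ‖A' k‖) / mu := by field_simp; ring

theorem vdc2 (a b lam M : ℝ) (A A' : ℝ → ℂ) (ψ ψ' ψ'' : ℝ → ℝ)
    (hab : a ≤ b) (hlam : 0 < lam)
    (hψd : ∀ k ∈ Icc a b, HasDerivAt ψ (ψ' k) k)
    (hψ'd : ∀ k ∈ Icc a b, HasDerivAt ψ' (ψ'' k) k)
    (hψ''c : ContinuousOn ψ'' (Icc a b))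
    (hψ''lb : ∀ k ∈ Icc a b, lam ≤ ψ'' k)
    (hAc : ContinuousOn A (Icc a b)) (hA'c : ContinuousOn A' (Icc a b))
    (hAd : ∀ k ∈ Ioo a b, HasDerivAt A (A' k) k)
    (hM : ∀ k ∈ Icc a b, ‖A k‖ ≤ M) :
    ‖∫ k in a..b, A k * Complex.exp (Complex.I * (ψ k : ℂ))‖ ≤
      (12 * M + 2 * ∫ k in a..b, ‖A' k‖) / Real.sqrt lam := by
  have hM0 : 0 ≤ M := le_trans (norm_nonneg _) (hM a ⟨le_refl a, hab⟩)
  have hV0 : 0 ≤ ∫ k in a..b, ‖A' k‖ :=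
    intervalIntegral.integral_nonneg hab (fun k _ => norm_nonneg _)
  set V := ∫ k in a..b, ‖A' k‖ with hV
  have hsl : 0 < Real.sqrt lam := Real.sqrt_pos.2 hlam
  have hψ'c : ContinuousOn ψ' (Icc a b) := fun k hk =>
    (hψ'd k hk).continuousAt.continuousWithinAt
  -- ψ' is lam-expanding on Icc a b
  have hexp : ∀ x ∈ Icc a b, ∀ y ∈ Icc a b, x ≤ y → lam * (y - x) ≤ ψ' y - ψ' x := by
    intro x hx y hy hxy
    have hmono : MonotoneOn (fun k => ψ' k - lam * k) (Icc a b) := by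
      apply monotoneOn_of_deriv_nonneg (convex_Icc a b)
        (hψ'c.sub (continuousOn_const.mul continuousOn_id))
      · intro k hk
        rw [interior_Icc] at hk
        exact (((hψ'd k (Ioo_subset_Icc_self hk)).sub
          ((hasDerivAt_id k).const_mul lam)).differentiableAt).differentiableWithinAt
      · intro k hk
        rw [interior_Icc] at hk
        rw [HasDerivAt.deriv (f := ψ' - (fun _ => lam) * id) ((hψ'd k (Ioo_subset_Icc_self hk)).sub
          ((hasDerivAt_id k).const_mul lam))]
        have := hψ''lb k (Ioo_subset_Icc_self hk)
        simp only [mul_one]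
        linarith
    have := hmono hx hy hxy
    simp only at this
    linarith
  have hψ'mono : ∀ x ∈ Icc a b, ∀ y ∈ Icc a b, x ≤ y → ψ' x ≤ ψ' y := by
    intro x hx y hy hxy
    have := hexp x hx y hy hxy
    nlinarith [hlam.le, sub_nonneg.2 hxy]
  -- split points
  set S := {k | k ∈ Icc a b ∧ ψ' k ≤ -Real.sqrt lam} with hS
  set T := {k | k ∈ Icc a b ∧ Real.sqrt lam ≤ ψ' k} with hT
  have hSclosed : IsClosed S := by
    have h : S = Icc a b ∩ ψ' ⁻¹' (Iic (-Real.sqrt lam)) := rfl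
    rw [h]
    exact hψ'c.preimage_isClosed_of_isClosed isClosed_Icc isClosed_Iic
  have hTclosed : IsClosed T := by
    have h : T = Icc a b ∩ ψ' ⁻¹' (Ici (Real.sqrt lam)) := rfl
    rw [h]
    exact hψ'c.preimage_isClosed_of_isClosed isClosed_Icc isClosed_Ici
  classical
  set c := if h : S.Nonempty then sSup S else a with hc
  set d := if h : T.Nonempty then sInf T else b with hd
  have hSsub : S ⊆ Icc a b := fun k hk => hk.1
  have hTsub : T ⊆ Icc a b := fun k hk => hk.1
  have hcmem : c ∈ Icc a b := by
    rw [hc]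
    split_ifs with h
    · exact hSsub (hSclosed.csSup_mem h (BddAbove.mono hSsub (bddAbove_Icc)))
    · exact ⟨le_refl a, hab⟩
  have hdmem : d ∈ Icc a b := by
    rw [hd]
    split_ifs with h
    · exact hTsub (hTclosed.csInf_mem h (BddBelow.mono hTsub (bddBelow_Icc)))
    · exact ⟨hab, le_refl b⟩
  have hSle : ∀ k ∈ S, k ≤ c := by
    intro k hk; rw [hc]
    split_ifs with h
    · exact le_csSup (BddAbove.mono hSsub bddAbove_Icc) hk
    · exact absurd ⟨k, hk⟩ h
  have hTge : ∀ k ∈ T, d ≤ k := by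
    intro k hk; rw [hd]
    split_ifs with h
    · exact csInf_le (BddBelow.mono hTsub bddBelow_Icc) hk
    · exact absurd ⟨k, hk⟩ h
  have hcd : c ≤ d := by
    by_contra hlt
    push_neg at hlt
    have hSne : S.Nonempty := by
      by_contra h
      have hca : c = a := by rw [hc, dif_neg h]
      have had : a ≤ d := hdmem.1
      rw [hca] at hlt; linarith
    have hTne : T.Nonempty := by
      by_contra h
      have hdb : d = b := by rw [hd, dif_neg h]
      have hcb : c ≤ b := hcmem.2
      rw [hdb] at hlt; linarith
    have hcS : c ∈ S := by
      rw [hc, dif_pos hSne]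
      exact hSclosed.csSup_mem hSne (BddAbove.mono hSsub bddAbove_Icc)
    have hdT : d ∈ T := by
      rw [hd, dif_pos hTne]
      exact hTclosed.csInf_mem hTne (BddBelow.mono hTsub bddBelow_Icc)
    have := hψ'mono d hdmem c hcmem hlt.le
    have h1 := hcS.2
    have h2 := hdT.2
    linarith
  -- setup
  have hψc : ContinuousOn ψ (Icc a b) := fun k hk =>
    (hψd k hk).continuousAt.continuousWithinAt
  set E : ℝ → ℂ := fun k => Complex.exp (Complex.I * (ψ k : ℂ)) with hE
  have hEc : ContinuousOn E (Icc a b) :=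
    Complex.continuous_exp.comp_continuousOn
      ((Complex.continuous_ofReal.comp_continuousOn hψc).const_smul Complex.I)
  have hAEc : ContinuousOn (fun k => A k * E k) (Icc a b) := hAc.mul hEc
  have hsub : ∀ u v : ℝ, u ∈ Icc a b → v ∈ Icc a b → u ≤ v →
      IntervalIntegrable (fun k => A k * E k) volume u v := by
    intro u v hu hv huv
    apply ContinuousOn.intervalIntegrable
    apply hAEc.mono
    rw [uIcc_of_le huv]
    exact Icc_subset_Icc hu.1 hv.2
  have hVmono : ∀ u v : ℝ, u ∈ Icc a b → v ∈ Icc a b → u ≤ v →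
      (∫ k in u..v, ‖A' k‖) ≤ V := by
    intro u v hu hv huv
    apply intervalIntegral.integral_mono_interval hu.1 huv hv.2
    · filter_upwards with k using norm_nonneg _
    · exact ((hA'c.norm.mono (by rw [uIcc_of_le hab])).intervalIntegrable)
  -- side estimate via vdc1
  have hside : ∀ u v : ℝ, u ∈ Icc a b → v ∈ Icc a b → u ≤ v →
      (∀ k ∈ Icc u v, Real.sqrt lam ≤ |ψ' k|) →
      ‖∫ k in u..v, A k * E k‖ ≤ (4 * M + V) / Real.sqrt lam := by
    intro u v hu hv huv hmu
    have hIcc : Icc u v ⊆ Icc a b := Icc_subset_Icc hu.1 hv.2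
    have hIoo : Ioo u v ⊆ Ioo a b := Ioo_subset_Ioo hu.1 hv.2
    have h := vdc1 u v (Real.sqrt lam) M A A' ψ ψ' ψ'' huv hsl
      (fun k hk => hψd k (hIcc hk)) (fun k hk => hψ'd k (hIcc hk))
      (hψ''c.mono hIcc) (fun k hk => le_trans hlam.le (hψ''lb k (hIcc hk))) hmu
      (hAc.mono hIcc) (hA'c.mono hIcc) (fun k hk => hAd k (hIoo hk))
      (fun k hk => hM k (hIcc hk))
    apply le_trans h
    gcongr
    exact hVmono u v hu hv huv
  -- left bound
  have hleft : ‖∫ k in a..c, A k * E k‖ ≤ (4 * M + V) / Real.sqrt lam := by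
    by_cases hSne : S.Nonempty
    · have hcS : c ∈ S := by
        rw [hc, dif_pos hSne]
        exact hSclosed.csSup_mem hSne (BddAbove.mono hSsub bddAbove_Icc)
      apply hside a c ⟨le_refl a, hab⟩ hcmem hcmem.1
      intro k hk
      have hk' : k ∈ Icc a b := Icc_subset_Icc (le_refl a) hcmem.2 hk
      have h1 : ψ' k ≤ ψ' c := hψ'mono k hk' c hcmem hk.2
      have h2 : ψ' k ≤ -Real.sqrt lam := le_trans h1 hcS.2
      rw [_root_.abs_of_nonpos (by linarith [hsl])]
      linarith
    · have : c = a := by rw [hc, dif_neg hSne]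
      rw [this]
      rw [intervalIntegral.integral_same]
      rw [norm_zero]
      positivity
  -- right bound
  have hright : ‖∫ k in d..b, A k * E k‖ ≤ (4 * M + V) / Real.sqrt lam := by
    by_cases hTne : T.Nonempty
    · have hdT : d ∈ T := by
        rw [hd, dif_pos hTne]
        exact hTclosed.csInf_mem hTne (BddBelow.mono hTsub bddBelow_Icc)
      apply hside d b hdmem ⟨hab, le_refl b⟩ hdmem.2
      intro k hk
      have hk' : k ∈ Icc a b := Icc_subset_Icc hdmem.1 (le_refl b) hk
      have h1 : ψ' d ≤ ψ' k := hψ'mono d hdmem k hk' hk.1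
      have h2 : Real.sqrt lam ≤ ψ' k := le_trans hdT.2 h1
      rw [_root_.abs_of_nonneg (by linarith [hsl])]
      linarith
    · have : d = b := by rw [hd, dif_neg hTne]
      rw [this]
      rw [intervalIntegral.integral_same]
      rw [norm_zero]
      positivity
  -- middle length
  have hdc : d - c ≤ 4 / Real.sqrt lam := by
    rcases le_or_gt d c with h | h
    · have h0 : 0 ≤ 4 / Real.sqrt lam := by positivity
      linarith
    · have hgap0 : 0 < d - c := by linarith
      have hxI : c + (d - c) / 4 ∈ Icc a b :=
        ⟨by linarith [hcmem.1], by linarith [hdmem.2]⟩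
      have hyI : c + 3 * (d - c) / 4 ∈ Icc a b :=
        ⟨by linarith [hcmem.1], by linarith [hdmem.2]⟩
      have hxS : c + (d - c) / 4 ∉ S := fun hmem => by linarith [hSle _ hmem]
      have hyT : c + 3 * (d - c) / 4 ∉ T := fun hmem => by linarith [hTge _ hmem]
      have hx2 : -Real.sqrt lam < ψ' (c + (d - c) / 4) := by
        by_contra hcon
        push_neg at hcon
        exact hxS ⟨hxI, hcon⟩
      have hy2 : ψ' (c + 3 * (d - c) / 4) < Real.sqrt lam := by
        by_contra hcon
        push_neg at hcon
        exact hyT ⟨hyI, hcon⟩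
      have h4 := hexp _ hxI _ hyI (by linarith)
      have he : (c + 3 * (d - c) / 4) - (c + (d - c) / 4) = (d - c) / 2 := by ring
      rw [he] at h4
      have hlamsq : Real.sqrt lam * Real.sqrt lam = lam := Real.mul_self_sqrt hlam.le
      rw [le_div_iff₀ hsl]
      have h7 : ((d - c) * Real.sqrt lam) * Real.sqrt lam < 4 * Real.sqrt lam := by
        rw [mul_assoc, hlamsq]
        linarith
      exact (lt_of_mul_lt_mul_right h7 hsl.le).le
  have hmid : ‖∫ k in c..d, A k * E k‖ ≤ M * (4 / Real.sqrt lam) := by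
    have h1 : ‖∫ k in c..d, A k * E k‖ ≤ M * |d - c| := by
      apply intervalIntegral.norm_integral_le_of_norm_le_const
      intro x hx
      rw [uIoc_of_le hcd] at hx
      have hx' : x ∈ Icc a b :=
        ⟨le_trans hcmem.1 hx.1.le, le_trans hx.2 hdmem.2⟩
      calc ‖A x * E x‖ = ‖A x‖ * ‖E x‖ := norm_mul _ _
        _ = ‖A x‖ := by rw [hE, normE, mul_one]
        _ ≤ M := hM x hx'
    apply le_trans h1
    rw [_root_.abs_of_nonneg (by linarith : (0:ℝ) ≤ d - c)]
    exact mul_le_mul_of_nonneg_left hdc hM0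
  -- combine
  have hsplit1 : (∫ k in a..c, A k * E k) + (∫ k in c..d, A k * E k) =
      ∫ k in a..d, A k * E k :=
    intervalIntegral.integral_add_adjacent_intervals
      (hsub a c ⟨le_refl a, hab⟩ hcmem hcmem.1)
      (hsub c d hcmem hdmem hcd)
  have hsplit2 : (∫ k in a..d, A k * E k) + (∫ k in d..b, A k * E k) =
      ∫ k in a..b, A k * E k :=
    intervalIntegral.integral_add_adjacent_intervals
      (hsub a d ⟨le_refl a, hab⟩ hdmem hdmem.1)
      (hsub d b hdmem ⟨hab, le_refl b⟩ hdmem.2)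
  calc ‖∫ k in a..b, A k * E k‖
      = ‖((∫ k in a..c, A k * E k) + (∫ k in c..d, A k * E k)) +
          (∫ k in d..b, A k * E k)‖ := by rw [hsplit1, hsplit2]
    _ ≤ ‖(∫ k in a..c, A k * E k) + (∫ k in c..d, A k * E k)‖ +
          ‖∫ k in d..b, A k * E k‖ := norm_add_le _ _
    _ ≤ (‖∫ k in a..c, A k * E k‖ + ‖∫ k in c..d, A k * E k‖) +
          ‖∫ k in d..b, A k * E k‖ := by gcongr; exact norm_add_le _ _
    _ ≤ ((4 * M + V) / Real.sqrt lam + M * (4 / Real.sqrt lam)) +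
          (4 * M + V) / Real.sqrt lam := add_le_add (add_le_add hleft hmid) hright
    _ = (12 * M + 2 * V) / Real.sqrt lam := by field_simp; ring

section Part3
variable (m : ℝ)

-- phase derivatives
lemma phase_deriv1 (hm : 0 < m) (t p k : ℝ) :
    HasDerivAt (fun x => t * Real.sqrt (x ^ 2 + m ^ 2) + x * p)
      (t * (k / Real.sqrt (k ^ 2 + m ^ 2)) + p) k := by
  have hq : 0 < k ^ 2 + m ^ 2 := by positivity
  have h1 : HasDerivAt (fun x : ℝ => x ^ 2 + m ^ 2) (2 * k) k := by
    simpa using (hasDerivAt_pow 2 k).add_const (m ^ 2)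
  have h2 := (Real.hasDerivAt_sqrt (ne_of_gt hq)).comp k h1
  have h3 : HasDerivAt (fun x => Real.sqrt (x ^ 2 + m ^ 2))
      (k / Real.sqrt (k ^ 2 + m ^ 2)) k := by
    refine h2.congr_deriv ?_
    symm
    have hs : Real.sqrt (k ^ 2 + m ^ 2) ≠ 0 := ne_of_gt (Real.sqrt_pos.2 hq)
    field_simp
  have h5 := (h3.const_mul t).add ((hasDerivAt_id k).mul_const p)
  refine h5.congr_deriv ?_
  symm
  simp

lemma phase_deriv2 (hm : 0 < m) (t p k : ℝ) :
    HasDerivAt (fun x => t * (x / Real.sqrt (x ^ 2 + m ^ 2)) + p)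
      (t * m ^ 2 / ((k ^ 2 + m ^ 2) * Real.sqrt (k ^ 2 + m ^ 2))) k := by
  have hq : 0 < k ^ 2 + m ^ 2 := by positivity
  have hs : 0 < Real.sqrt (k ^ 2 + m ^ 2) := Real.sqrt_pos.2 hq
  have h1 : HasDerivAt (fun x : ℝ => x ^ 2 + m ^ 2) (2 * k) k := by
    simpa using (hasDerivAt_pow 2 k).add_const (m ^ 2)
  have h2 : HasDerivAt (fun x => Real.sqrt (x ^ 2 + m ^ 2))
      (k / Real.sqrt (k ^ 2 + m ^ 2)) k := by
    have h2' := (Real.hasDerivAt_sqrt (ne_of_gt hq)).comp k h1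
    refine h2'.congr_deriv ?_
    symm
    field_simp
  have h3 : HasDerivAt (fun x => x / Real.sqrt (x ^ 2 + m ^ 2))
      ((1 * Real.sqrt (k ^ 2 + m ^ 2) - k * (k / Real.sqrt (k ^ 2 + m ^ 2))) /
        (Real.sqrt (k ^ 2 + m ^ 2)) ^ 2) k :=
    (hasDerivAt_id k).div h2 (ne_of_gt hs)
  have h4 : (1 * Real.sqrt (k ^ 2 + m ^ 2) - k * (k / Real.sqrt (k ^ 2 + m ^ 2))) /
      (Real.sqrt (k ^ 2 + m ^ 2)) ^ 2 = m ^ 2 / ((k ^ 2 + m ^ 2) * Real.sqrt (k ^ 2 + m ^ 2)) := by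
    rw [Real.sq_sqrt hq.le]
    rw [one_mul, div_eq_div_iff (by positivity) (by positivity)]
    have hss : Real.sqrt (k ^ 2 + m ^ 2) * Real.sqrt (k ^ 2 + m ^ 2) = k ^ 2 + m ^ 2 :=
      Real.mul_self_sqrt hq.le
    field_simp
    nlinarith [hss]
  rw [h4] at h3
  have h6 := (h3.const_mul t).add_const p
  refine h6.congr_deriv ?_
  symm
  rw [mul_div_assoc]

set_option maxHeartbeats 1000000 in
lemma interval_est (α : ℝ) (hm : 0 < m) (hα : 3 / 2 < α)
    (w w' : ℝ → ℂ)
    (hwc : ContinuousOn w (Ici 1)) (hw'c : ContinuousOn w' (Ici 1))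
    (hwd : ∀ k : ℝ, 1 < k → HasDerivAt w (w' k) k)
    (hw1 : ∀ k : ℝ, 1 ≤ k → ‖w k‖ ≤ 1)
    (hw'1 : ∀ k : ℝ, 1 < k → ‖w' k‖ ≤ k⁻¹)
    (t p a : ℝ) (ht : 1 ≤ t) (ha : 1 ≤ a) :
    ‖∫ k in a..2 * a, w k * ((k ^ (-α) : ℝ) : ℂ) *
        Complex.exp (Complex.I * ((t * Real.sqrt (k ^ 2 + m ^ 2) + k * p : ℝ) : ℂ))‖ ≤
      ((14 + 2 * α) * Real.sqrt ((4 + m ^ 2) * Real.sqrt (4 + m ^ 2)) / m) *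
        t ^ (-(1 / 2 : ℝ)) * a ^ ((3 : ℝ) / 2 - α) := by
  have ha0 : 0 < a := lt_of_lt_of_le one_pos ha
  have ht0 : 0 < t := lt_of_lt_of_le one_pos ht
  have hab : a ≤ 2 * a := by linarith
  have hα0 : 0 < α := by linarith
  set cm := (4 + m ^ 2) * Real.sqrt (4 + m ^ 2) with hcm
  have hcm0 : 0 < cm := by
    rw [hcm]; positivity
  set lam := t * m ^ 2 / (cm * a ^ 3) with hlam
  have hlam0 : 0 < lam := by rw [hlam]; positivity
  set A : ℝ → ℂ := fun k => w k * ((k ^ (-α) : ℝ) : ℂ) with hA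
  set A' : ℝ → ℂ := fun k => w' k * ((k ^ (-α) : ℝ) : ℂ) +
    w k * ((-α * k ^ (-α - 1) : ℝ) : ℂ) with hA'
  set ψ : ℝ → ℝ := fun k => t * Real.sqrt (k ^ 2 + m ^ 2) + k * p with hψ
  set ψ' : ℝ → ℝ := fun k => t * (k / Real.sqrt (k ^ 2 + m ^ 2)) + p with hψ'
  set ψ'' : ℝ → ℝ := fun k => t * m ^ 2 / ((k ^ 2 + m ^ 2) * Real.sqrt (k ^ 2 + m ^ 2))
    with hψ''
  have hIcc : Icc a (2 * a) ⊆ Ici 1 := fun k hk => le_trans ha hk.1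
  have hpos : ∀ k ∈ Icc a (2 * a), (0 : ℝ) < k := fun k hk => lt_of_lt_of_le ha0 hk.1
  -- ψ'' facts
  have hψ''c : ContinuousOn ψ'' (Icc a (2 * a)) := by
    apply Continuous.continuousOn
    apply Continuous.div continuous_const
    · exact (by continuity : Continuous fun k : ℝ => k ^ 2 + m ^ 2).mul
        (Real.continuous_sqrt.comp (by continuity))
    · intro k
      have : (0:ℝ) < k ^ 2 + m ^ 2 := by positivity
      positivity
  have hψ''lb : ∀ k ∈ Icc a (2 * a), lam ≤ ψ'' k := by
    intro k hk
    have hq : 0 < k ^ 2 + m ^ 2 := by positivity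
    have h1 : k ^ 2 + m ^ 2 ≤ (4 + m ^ 2) * a ^ 2 := by
      have hk2 : k ≤ 2 * a := hk.2
      have hk0 : 0 ≤ k := (hpos k hk).le
      nlinarith [mul_self_nonneg (2 * a - k),
        mul_nonneg (mul_nonneg (sq_nonneg m) (by linarith : (0:ℝ) ≤ a - 1))
          (by linarith : (0:ℝ) ≤ a + 1)]
    have h2 : Real.sqrt (k ^ 2 + m ^ 2) ≤ Real.sqrt (4 + m ^ 2) * a := by
      have := Real.sqrt_le_sqrt h1
      calc Real.sqrt (k ^ 2 + m ^ 2) ≤ Real.sqrt ((4 + m ^ 2) * a ^ 2) := this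
        _ = Real.sqrt (4 + m ^ 2) * a := by
            rw [Real.sqrt_mul (by positivity), Real.sqrt_sq ha0.le]
    have h3 : (k ^ 2 + m ^ 2) * Real.sqrt (k ^ 2 + m ^ 2) ≤ cm * a ^ 3 := by
      have := mul_le_mul h1 h2 (Real.sqrt_nonneg _) (by positivity)
      calc (k ^ 2 + m ^ 2) * Real.sqrt (k ^ 2 + m ^ 2)
          ≤ (4 + m ^ 2) * a ^ 2 * (Real.sqrt (4 + m ^ 2) * a) := this
        _ = cm * a ^ 3 := by rw [hcm]; ring
    rw [hlam, hψ'']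
    have hden : 0 < (k ^ 2 + m ^ 2) * Real.sqrt (k ^ 2 + m ^ 2) := by
      have hs : 0 < Real.sqrt (k ^ 2 + m ^ 2) := Real.sqrt_pos.2 hq
      positivity
    rw [div_le_div_iff₀ (by positivity) hden]
    exact mul_le_mul_of_nonneg_left h3 (by positivity)
  -- A facts
  have hrpowc : ContinuousOn (fun k : ℝ => k ^ (-α)) (Ici 1) :=
    ContinuousOn.rpow_const continuousOn_id
      (fun k hk => Or.inl (ne_of_gt (lt_of_lt_of_le one_pos hk)))
  have hrpow'c : ContinuousOn (fun k : ℝ => -α * k ^ (-α - 1)) (Ici 1) :=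
    continuousOn_const.mul (ContinuousOn.rpow_const continuousOn_id
      (fun k hk => Or.inl (ne_of_gt (lt_of_lt_of_le one_pos hk))))
  have hAc : ContinuousOn A (Icc a (2 * a)) :=
    (hwc.mono hIcc).mul (Complex.continuous_ofReal.comp_continuousOn (hrpowc.mono hIcc))
  have hA'c : ContinuousOn A' (Icc a (2 * a)) :=
    ((hw'c.mono hIcc).mul
      (Complex.continuous_ofReal.comp_continuousOn (hrpowc.mono hIcc))).add
      ((hwc.mono hIcc).mul
        (Complex.continuous_ofReal.comp_continuousOn (hrpow'c.mono hIcc)))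
  have hAd : ∀ k ∈ Ioo a (2 * a), HasDerivAt A (A' k) k := by
    intro k hk
    have hk1 : 1 < k := lt_of_le_of_lt ha hk.1
    have hkne : k ≠ 0 := ne_of_gt (by linarith)
    have hr : HasDerivAt (fun x : ℝ => x ^ (-α)) (-α * k ^ (-α - 1)) k :=
      Real.hasDerivAt_rpow_const (Or.inl hkne)
    exact (hwd k hk1).mul hr.ofReal_comp
  have hMb : ∀ k ∈ Icc a (2 * a), ‖A k‖ ≤ a ^ (-α) := by
    intro k hk
    have hk0 : 0 < k := hpos k hk
    rw [hA]
    simp only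
    rw [norm_mul, Complex.norm_real, Real.norm_eq_abs,
      _root_.abs_of_nonneg (Real.rpow_nonneg hk0.le _)]
    calc ‖w k‖ * k ^ (-α) ≤ 1 * k ^ (-α) :=
          mul_le_mul_of_nonneg_right (hw1 k (hIcc hk)) (Real.rpow_nonneg hk0.le _)
      _ = k ^ (-α) := one_mul _
      _ ≤ a ^ (-α) := Real.rpow_le_rpow_of_nonpos ha0 hk.1 (by linarith)
  -- V bound
  have hVb : (∫ k in a..2 * a, ‖A' k‖) ≤ (1 + α) * a ^ (-α) := by
    have hptw : ∀ k ∈ Ioc a (2 * a), ‖A' k‖ ≤ (1 + α) * a ^ (-α - 1) := by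
      intro k hk
      have hk1 : 1 < k := lt_of_le_of_lt ha hk.1
      have hk0 : 0 < k := by linarith
      have h1 : ‖A' k‖ ≤ ‖w' k‖ * k ^ (-α) + ‖w k‖ * (α * k ^ (-α - 1)) := by
        rw [hA']
        simp only
        refine le_trans (norm_add_le _ _) ?_
        rw [norm_mul, norm_mul, Complex.norm_real, Complex.norm_real,
          Real.norm_eq_abs, Real.norm_eq_abs,
          _root_.abs_of_nonneg (Real.rpow_nonneg hk0.le _)]
        have : |(-α * k ^ (-α - 1))| = α * k ^ (-α - 1) := by
          rw [abs_mul, abs_neg, _root_.abs_of_pos hα0,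
            _root_.abs_of_nonneg (Real.rpow_nonneg hk0.le _)]
        rw [this]
      have h2 : ‖w' k‖ * k ^ (-α) ≤ k ^ (-α - 1) := by
        have hr : k⁻¹ * k ^ (-α) = k ^ (-α - 1) := by
          rw [← Real.rpow_neg_one k, ← Real.rpow_add hk0]
          congr 1
          ring
        rw [← hr]
        exact mul_le_mul_of_nonneg_right (hw'1 k hk1) (Real.rpow_nonneg hk0.le _)
      have h3 : ‖w k‖ * (α * k ^ (-α - 1)) ≤ α * k ^ (-α - 1) := by
        have hnn : 0 ≤ α * k ^ (-α - 1) := by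
          exact mul_nonneg hα0.le (Real.rpow_nonneg hk0.le _)
        calc ‖w k‖ * (α * k ^ (-α - 1)) ≤ 1 * (α * k ^ (-α - 1)) :=
              mul_le_mul_of_nonneg_right (hw1 k (le_trans ha hk.1.le)) hnn
          _ = α * k ^ (-α - 1) := one_mul _
      have h4 : k ^ (-α - 1) ≤ a ^ (-α - 1) :=
        Real.rpow_le_rpow_of_nonpos ha0 hk.1.le (by linarith)
      calc ‖A' k‖ ≤ ‖w' k‖ * k ^ (-α) + ‖w k‖ * (α * k ^ (-α - 1)) := h1
        _ ≤ k ^ (-α - 1) + α * k ^ (-α - 1) := add_le_add h2 h3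
        _ = (1 + α) * k ^ (-α - 1) := by ring
        _ ≤ (1 + α) * a ^ (-α - 1) := by
            exact mul_le_mul_of_nonneg_left h4 (by linarith)
    have hstep : (∫ k in a..2 * a, ‖A' k‖) ≤ ∫ k in a..2 * a, ((1 + α) * a ^ (-α - 1)) := by
      rw [intervalIntegral.integral_of_le hab, intervalIntegral.integral_of_le hab]
      apply setIntegral_mono_on
      · exact (hA'c.norm.integrableOn_Icc).mono_set Ioc_subset_Icc_self
      · exact integrableOn_const measure_Ioc_lt_top.ne
      · exact measurableSet_Ioc
      · exact hptw
    have hconst : (∫ k in a..2 * a, ((1 + α) * a ^ (-α - 1))) = (1 + α) * a ^ (-α) := by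
      rw [intervalIntegral.integral_const, smul_eq_mul]
      have ha' : 2 * a - a = a := by ring
      rw [ha']
      have h5 : a * a ^ (-α - 1) = a ^ (-α) := by
        nth_rewrite 1 [← Real.rpow_one a]
        rw [← Real.rpow_add ha0]
        norm_num
      calc a * ((1 + α) * a ^ (-α - 1)) = (1 + α) * (a * a ^ (-α - 1)) := by ring
        _ = (1 + α) * a ^ (-α) := by rw [h5]
    rw [← hconst]
    exact hstep
  -- apply vdc2
  have hψd : ∀ k ∈ Icc a (2 * a), HasDerivAt ψ (ψ' k) k :=
    fun k _ => phase_deriv1 m hm t p k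
  have hψ'd : ∀ k ∈ Icc a (2 * a), HasDerivAt ψ' (ψ'' k) k :=
    fun k _ => phase_deriv2 m hm t p k
  have hmain := vdc2 a (2 * a) lam (a ^ (-α)) A A' ψ ψ' ψ'' hab hlam0
    hψd hψ'd hψ''c hψ''lb hAc hA'c hAd hMb
  have heq : (∫ k in a..2 * a, w k * ((k ^ (-α) : ℝ) : ℂ) *
      Complex.exp (Complex.I * ((t * Real.sqrt (k ^ 2 + m ^ 2) + k * p : ℝ) : ℂ))) =
      ∫ k in a..2 * a, A k * Complex.exp (Complex.I * ((ψ k : ℝ) : ℂ)) := rfl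
  rw [heq]
  have hnum : (12 * a ^ (-α) + 2 * ∫ k in a..2 * a, ‖A' k‖) ≤ (14 + 2 * α) * a ^ (-α) := by
    nlinarith [hVb, Real.rpow_nonneg ha0.le (-α)]
  have hstep2 : ‖∫ k in a..2 * a, A k * Complex.exp (Complex.I * ((ψ k : ℝ) : ℂ))‖ ≤
      ((14 + 2 * α) * a ^ (-α)) / Real.sqrt lam := by
    refine le_trans hmain ?_
    have hsl0 : 0 < Real.sqrt lam := Real.sqrt_pos.2 hlam0
    rw [div_le_div_iff₀ hsl0 hsl0]
    exact mul_le_mul_of_nonneg_right hnum hsl0.le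
  apply le_trans hstep2
  -- algebra
  have hsqa : Real.sqrt (a ^ 3) = a ^ ((3 : ℝ) / 2) := by
    rw [Real.sqrt_eq_rpow, ← Real.rpow_natCast a 3, ← Real.rpow_mul ha0.le]
    norm_num
  have hst : Real.sqrt lam = Real.sqrt t * m / (Real.sqrt cm * a ^ ((3 : ℝ) / 2)) := by
    rw [hlam, Real.sqrt_div (by positivity), Real.sqrt_mul ht0.le,
      Real.sqrt_sq hm.le, Real.sqrt_mul hcm0.le, hsqa]
  have h1 : 0 < Real.sqrt t := Real.sqrt_pos.2 ht0
  have h2 : 0 < Real.sqrt cm := Real.sqrt_pos.2 hcm0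
  have h3 : 0 < a ^ ((3 : ℝ) / 2) := Real.rpow_pos_of_pos ha0 _
  have hfinal : ((14 + 2 * α) * a ^ (-α)) / Real.sqrt lam =
      ((14 + 2 * α) * Real.sqrt cm / m) * t ^ (-(1 / 2 : ℝ)) * a ^ ((3 : ℝ) / 2 - α) := by
    rw [hst]
    rw [show a ^ ((3 : ℝ) / 2 - α) = a ^ ((3 : ℝ) / 2) * a ^ (-α) by
      rw [← Real.rpow_add ha0]; ring_nf]
    rw [show t ^ (-(1 / 2 : ℝ)) = (Real.sqrt t)⁻¹ by
      rw [Real.sqrt_eq_rpow, ← Real.rpow_neg ht0.le]]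
    field_simp
  rw [hfinal]

section P4
variable (m : ℝ)

set_option maxHeartbeats 1000000 in
lemma keyJpos (α : ℝ) (hm : 0 < m) (hα : 3 / 2 < α)
    (w w' : ℝ → ℂ)
    (hwc : ContinuousOn w (Ici 1)) (hw'c : ContinuousOn w' (Ici 1))
    (hwd : ∀ k : ℝ, 1 < k → HasDerivAt w (w' k) k)
    (hw1 : ∀ k : ℝ, 1 ≤ k → ‖w k‖ ≤ 1)
    (hw'1 : ∀ k : ℝ, 1 < k → ‖w' k‖ ≤ k⁻¹)
    (t p : ℝ) (ht : 1 ≤ t) :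
    ‖∫ k in Ioi (1:ℝ), w k * ((k ^ (-α) : ℝ) : ℂ) *
        Complex.exp (Complex.I * ((t * Real.sqrt (k ^ 2 + m ^ 2) + k * p : ℝ) : ℂ))‖ ≤
      (((14 + 2 * α) * Real.sqrt ((4 + m ^ 2) * Real.sqrt (4 + m ^ 2)) / m) *
        (1 - (2:ℝ) ^ ((3 : ℝ) / 2 - α))⁻¹) * t ^ (-(1 / 2 : ℝ)) := by
  have ht0 : 0 < t := lt_of_lt_of_le one_pos ht
  set D := (14 + 2 * α) * Real.sqrt ((4 + m ^ 2) * Real.sqrt (4 + m ^ 2)) / m with hD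
  have hD0 : 0 ≤ D := by
    rw [hD]
    have : (0:ℝ) ≤ 14 + 2 * α := by linarith
    positivity
  set r := (2:ℝ) ^ ((3 : ℝ) / 2 - α) with hr
  have hr0 : 0 < r := Real.rpow_pos_of_pos two_pos _
  have hr1 : r < 1 := Real.rpow_lt_one_of_one_lt_of_neg one_lt_two (by linarith)
  set f : ℝ → ℂ := fun k => w k * ((k ^ (-α) : ℝ) : ℂ) *
    Complex.exp (Complex.I * ((t * Real.sqrt (k ^ 2 + m ^ 2) + k * p : ℝ) : ℂ)) with hf
  have hfc : ContinuousOn f (Ici 1) := by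
    apply ContinuousOn.mul
    · apply hwc.mul
      apply Complex.continuous_ofReal.comp_continuousOn
      exact ContinuousOn.rpow_const continuousOn_id
        (fun k hk => Or.inl (ne_of_gt (lt_of_lt_of_le one_pos hk)))
    · apply Complex.continuous_exp.comp_continuousOn
      apply ContinuousOn.const_smul _ Complex.I
      apply Complex.continuous_ofReal.comp_continuousOn
      apply Continuous.continuousOn
      continuity
  have hnormf : ∀ k : ℝ, 1 ≤ k → ‖f k‖ ≤ k ^ (-α) := by
    intro k hk
    have hk0 : 0 < k := lt_of_lt_of_le one_pos hk
    rw [hf]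
    simp only
    rw [norm_mul, norm_mul, normE, mul_one, Complex.norm_real, Real.norm_eq_abs,
      _root_.abs_of_nonneg (Real.rpow_nonneg hk0.le _)]
    calc ‖w k‖ * k ^ (-α) ≤ 1 * k ^ (-α) :=
        mul_le_mul_of_nonneg_right (hw1 k hk) (Real.rpow_nonneg hk0.le _)
      _ = k ^ (-α) := one_mul _
  have hfi : IntegrableOn f (Ioi (1:ℝ)) := by
    apply Integrable.mono' (integrableOn_Ioi_rpow_of_lt (by linarith : -α < -1) one_pos)
    · exact (hfc.mono (Ioi_subset_Ici (le_refl 1))).aestronglyMeasurable measurableSet_Ioi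
    · filter_upwards [ae_restrict_mem measurableSet_Ioi] with k hk
      exact hnormf k (le_of_lt hk)
  -- partial sums
  have hpow1 : ∀ j : ℕ, (1:ℝ) ≤ 2 ^ j := fun j => one_le_pow₀ one_le_two
  have hint : ∀ j : ℕ, IntervalIntegrable f volume ((2:ℝ) ^ j) ((2:ℝ) ^ (j + 1)) := by
    intro j
    apply ContinuousOn.intervalIntegrable
    apply hfc.mono
    rw [uIcc_of_le (by rw [pow_succ]; nlinarith [hpow1 j] : (2:ℝ) ^ j ≤ 2 ^ (j + 1))]
    exact fun x hx => le_trans (hpow1 j) hx.1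
  have hpartial : ∀ N : ℕ, ‖∫ k in (1:ℝ)..(2:ℝ) ^ N, f k‖ ≤ D * t ^ (-(1 / 2 : ℝ)) * (1 - r)⁻¹ := by
    intro N
    have hsum : ∑ j ∈ Finset.range N, ∫ k in ((2:ℝ) ^ j)..((2:ℝ) ^ (j + 1)), f k =
        ∫ k in ((2:ℝ) ^ 0)..((2:ℝ) ^ N), f k :=
      intervalIntegral.sum_integral_adjacent_intervals (fun j _ => hint j)
    rw [show ((2:ℝ) ^ 0 : ℝ) = 1 by norm_num] at hsum
    rw [← hsum]
    have hterm : ∀ j : ℕ, ‖∫ k in ((2:ℝ) ^ j)..((2:ℝ) ^ (j + 1)), f k‖ ≤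
        D * t ^ (-(1 / 2 : ℝ)) * r ^ j := by
      intro j
      have h2 : (2:ℝ) ^ (j + 1) = 2 * (2:ℝ) ^ j := by ring
      have := interval_est m α hm hα w w' hwc hw'c hwd hw1 hw'1 t p ((2:ℝ) ^ j) ht (hpow1 j)
      rw [h2]
      apply le_trans this
      have hrj : ((2:ℝ) ^ j) ^ ((3 : ℝ) / 2 - α) = r ^ j := by
        rw [← Real.rpow_natCast (2:ℝ) j, ← Real.rpow_mul (by norm_num : (0:ℝ) ≤ 2),
          mul_comm, Real.rpow_mul (by norm_num : (0:ℝ) ≤ 2), Real.rpow_natCast]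
      rw [hrj, hD]
    calc ‖∑ j ∈ Finset.range N, ∫ k in ((2:ℝ) ^ j)..((2:ℝ) ^ (j + 1)), f k‖
        ≤ ∑ j ∈ Finset.range N, ‖∫ k in ((2:ℝ) ^ j)..((2:ℝ) ^ (j + 1)), f k‖ :=
          norm_sum_le _ _
      _ ≤ ∑ j ∈ Finset.range N, D * t ^ (-(1 / 2 : ℝ)) * r ^ j :=
          Finset.sum_le_sum (fun j _ => hterm j)
      _ = D * t ^ (-(1 / 2 : ℝ)) * ∑ j ∈ Finset.range N, r ^ j := by
          rw [Finset.mul_sum]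
      _ ≤ D * t ^ (-(1 / 2 : ℝ)) * (1 - r)⁻¹ := by
          apply mul_le_mul_of_nonneg_left _ (by positivity)
          have hsum2 : ∑ j ∈ Finset.range N, r ^ j ≤ ∑' j : ℕ, r ^ j :=
            Summable.sum_le_tsum (Finset.range N) (fun j _ => pow_nonneg hr0.le j)
              (summable_geometric_of_lt_one hr0.le hr1)
          rw [tsum_geometric_of_lt_one hr0.le hr1] at hsum2
          exact hsum2
  have htend : Tendsto (fun N : ℕ => ∫ k in (1:ℝ)..(2:ℝ) ^ N, f k) atTop
      (nhds (∫ k in Ioi (1:ℝ), f k)) :=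
    intervalIntegral_tendsto_integral_Ioi 1 hfi
      (tendsto_pow_atTop_atTop_of_one_lt one_lt_two)
  have := le_of_tendsto htend.norm (Eventually.of_forall hpartial)
  calc ‖∫ k in Ioi (1:ℝ), f k‖ ≤ D * t ^ (-(1 / 2 : ℝ)) * (1 - r)⁻¹ := this
    _ = D * (1 - r)⁻¹ * t ^ (-(1 / 2 : ℝ)) := by ring

lemma keyJ (α : ℝ) (hm : 0 < m) (hα : 3 / 2 < α)
    (w w' : ℝ → ℂ)
    (hwc : ContinuousOn w (Ici 1)) (hw'c : ContinuousOn w' (Ici 1))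
    (hwd : ∀ k : ℝ, 1 < k → HasDerivAt w (w' k) k)
    (hw1 : ∀ k : ℝ, 1 ≤ k → ‖w k‖ ≤ 1)
    (hw'1 : ∀ k : ℝ, 1 < k → ‖w' k‖ ≤ k⁻¹)
    (t p s : ℝ) (ht : 1 ≤ t) (hs : s = t ∨ s = -t) :
    ‖∫ k in Ioi (1:ℝ), w k * ((k ^ (-α) : ℝ) : ℂ) *
        Complex.exp (Complex.I * ((s * Real.sqrt (k ^ 2 + m ^ 2) + k * p : ℝ) : ℂ))‖ ≤
      (((14 + 2 * α) * Real.sqrt ((4 + m ^ 2) * Real.sqrt (4 + m ^ 2)) / m) *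
        (1 - (2:ℝ) ^ ((3 : ℝ) / 2 - α))⁻¹) * t ^ (-(1 / 2 : ℝ)) := by
  rcases hs with hs | hs
  · rw [hs]
    exact keyJpos m α hm hα w w' hwc hw'c hwd hw1 hw'1 t p ht
  · rw [hs]
    set w2 : ℝ → ℂ := fun k => (starRingEnd ℂ) (w k) with hw2
    set w2' : ℝ → ℂ := fun k => (starRingEnd ℂ) (w' k) with hw2'
    have hconj : ∀ k : ℝ, (starRingEnd ℂ) (w k * ((k ^ (-α) : ℝ) : ℂ) *
        Complex.exp (Complex.I * ((-t * Real.sqrt (k ^ 2 + m ^ 2) + k * p : ℝ) : ℂ))) =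
        w2 k * ((k ^ (-α) : ℝ) : ℂ) *
          Complex.exp (Complex.I * ((t * Real.sqrt (k ^ 2 + m ^ 2) + k * (-p) : ℝ) : ℂ)) := by
      intro k
      rw [map_mul, map_mul, Complex.conj_ofReal, ← Complex.exp_conj]
      congr 1
      rw [map_mul, Complex.conj_I, Complex.conj_ofReal]
      push_cast
      ring
    have heq : ‖∫ k in Ioi (1:ℝ), w k * ((k ^ (-α) : ℝ) : ℂ) *
        Complex.exp (Complex.I * ((-t * Real.sqrt (k ^ 2 + m ^ 2) + k * p : ℝ) : ℂ))‖ =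
        ‖∫ k in Ioi (1:ℝ), w2 k * ((k ^ (-α) : ℝ) : ℂ) *
          Complex.exp (Complex.I * ((t * Real.sqrt (k ^ 2 + m ^ 2) + k * (-p) : ℝ) : ℂ))‖ := by
      rw [show (∫ k in Ioi (1:ℝ), w2 k * ((k ^ (-α) : ℝ) : ℂ) *
          Complex.exp (Complex.I * ((t * Real.sqrt (k ^ 2 + m ^ 2) + k * (-p) : ℝ) : ℂ))) =
          ∫ k in Ioi (1:ℝ), (starRingEnd ℂ) (w k * ((k ^ (-α) : ℝ) : ℂ) *
            Complex.exp (Complex.I * ((-t * Real.sqrt (k ^ 2 + m ^ 2) + k * p : ℝ) : ℂ))) by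
        exact integral_congr_ae (Eventually.of_forall (fun k => (hconj k).symm))]
      rw [integral_conj]
      rw [RCLike.norm_conj]
    rw [heq]
    apply keyJpos m α hm hα w2 w2'
    · exact hwc.star
    · exact hw'c.star
    · intro k hk
      exact (hwd k hk).star
    · intro k hk
      rw [hw2]; simp only [RCLike.norm_conj]
      exact hw1 k hk
    · intro k hk
      rw [hw2']; simp only [RCLike.norm_conj]
      exact hw'1 k hk
    · exact ht

end P4

noncomputable section FinalSec
variable (m : ℝ)

lemma Gcont (α s q : ℝ) (η : ℝ → ℂ) (hηc : ContinuousOn η (Ici 1)) :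
    ContinuousOn (fun k => η k * ((k ^ (-α) : ℝ) : ℂ) *
      Complex.exp (Complex.I * ((s * Real.sqrt (k ^ 2 + m ^ 2) + k * q : ℝ) : ℂ))) (Ici 1) := by
  apply ContinuousOn.mul
  · apply hηc.mul
    apply Complex.continuous_ofReal.comp_continuousOn
    exact ContinuousOn.rpow_const continuousOn_id
      (fun k hk => Or.inl (ne_of_gt (lt_of_lt_of_le one_pos hk)))
  · apply Complex.continuous_exp.comp_continuousOn
    apply ContinuousOn.const_smul _ Complex.I
    apply Complex.continuous_ofReal.comp_continuousOn
    apply Continuous.continuousOn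
    continuity

lemma Gint (α s q : ℝ) (hm : 0 < m) (hα : 3 / 2 < α) (η : ℝ → ℂ)
    (hηc : ContinuousOn η (Ici 1)) (hη1 : ∀ k : ℝ, 1 ≤ k → ‖η k‖ ≤ 1) :
    IntegrableOn (fun k => η k * ((k ^ (-α) : ℝ) : ℂ) *
      Complex.exp (Complex.I * ((s * Real.sqrt (k ^ 2 + m ^ 2) + k * q : ℝ) : ℂ))) (Ioi 1) := by
  apply Integrable.mono' (integrableOn_Ioi_rpow_of_lt (by linarith : -α < -1) one_pos)
  · exact ((Gcont m α s q η hηc).mono (Ioi_subset_Ici (le_refl 1))).aestronglyMeasurable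
      measurableSet_Ioi
  · filter_upwards [ae_restrict_mem measurableSet_Ioi] with k hk
    have hk1 : (1:ℝ) ≤ k := le_of_lt hk
    have hk0 : 0 < k := lt_of_lt_of_le one_pos hk1
    rw [norm_mul, norm_mul, normE, mul_one, Complex.norm_real, Real.norm_eq_abs,
      _root_.abs_of_nonneg (Real.rpow_nonneg hk0.le _)]
    calc ‖η k‖ * k ^ (-α) ≤ 1 * k ^ (-α) :=
        mul_le_mul_of_nonneg_right (hη1 k hk1) (Real.rpow_nonneg hk0.le _)
      _ = k ^ (-α) := one_mul _


set_option maxHeartbeats 2000000 in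
/-- for `η` smooth on `[1,∞)` with `|η| ≤ 1`, `|η'| ≤ k⁻¹`, `m > 0`,
`α > 3/2` and `g ∈ 𝒜₁`,
`sup_p |∫₁^∞ η(k) k^{−α} e^{±it√(k²+m²)+ikp} g(k) dk| ≤ C(m,α) ‖g‖_{𝒜₁} t^{−1/2}`
for all `t ≥ 1`. -/
theorem high_energy_oscillatory_estimate (m α : ℝ) (hm : 0 < m) (hα : 3 / 2 < α) :
    ∃ C : ℝ, ∀ (η g : ℝ → ℂ) (c : ℂ) (gh : ℝ → ℂ) (t p ε : ℝ),
      ContDiffOn ℝ 1 η (Set.Ici 1) →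
      (∀ k : ℝ, 1 ≤ k → ‖η k‖ ≤ 1) →
      (∀ k : ℝ, 1 ≤ k → ‖deriv η k‖ ≤ k⁻¹) →
      WienerRep1 g c gh →
      1 ≤ t → (ε = 1 ∨ ε = -1) →
      ‖∫ k in Set.Ioi (1:ℝ),
          η k * ((k ^ (-α) : ℝ) : ℂ) *
            Complex.exp (Complex.I * (ε * t * Real.sqrt (k ^ 2 + m ^ 2) + k * p)) * g k‖ ≤
        C * (‖c‖ + ∫ q : ℝ, ‖gh q‖) * t ^ (-(1 / 2 : ℝ)) := by
  set C := (((14 + 2 * α) * Real.sqrt ((4 + m ^ 2) * Real.sqrt (4 + m ^ 2)) / m) *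
    (1 - (2:ℝ) ^ ((3 : ℝ) / 2 - α))⁻¹) with hC
  have hC0 : 0 ≤ C := by
    rw [hC]
    have h1 : (0:ℝ) ≤ 14 + 2 * α := by linarith
    have h2 : (2:ℝ) ^ ((3 : ℝ) / 2 - α) < 1 :=
      Real.rpow_lt_one_of_one_lt_of_neg one_lt_two (by linarith)
    have h3 : (0:ℝ) ≤ (1 - (2:ℝ) ^ ((3 : ℝ) / 2 - α))⁻¹ := by
      apply inv_nonneg.2; linarith
    positivity
  refine ⟨C, ?_⟩
  intro η g c gh t p ε hη hη1 hη2 hW ht hε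
  obtain ⟨hghInt, hgRep⟩ := hW
  have ht0 : 0 < t := lt_of_lt_of_le one_pos ht
  set s := ε * t with hs
  have hscase : s = t ∨ s = -t := by
    rcases hε with h | h
    · left; rw [hs, h]; ring
    · right; rw [hs, h]; ring
  -- w facts
  have hwc : ContinuousOn η (Ici 1) := hη.continuousOn
  have hw'c : ContinuousOn (derivWithin η (Ici 1)) (Ici 1) :=
    hη.continuousOn_derivWithin (uniqueDiffOn_Ici 1) le_rfl
  have hwd : ∀ k : ℝ, 1 < k → HasDerivAt η (derivWithin η (Ici 1) k) k := by
    intro k hk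
    have hmem : Ici (1:ℝ) ∈ nhds k := Ici_mem_nhds hk
    have hd : DifferentiableWithinAt ℝ η (Ici 1) k :=
      (hη.differentiableOn one_ne_zero) k (le_of_lt hk)
    rw [derivWithin_of_mem_nhds hmem]
    exact (hd.differentiableAt hmem).hasDerivAt
  have hw'1 : ∀ k : ℝ, 1 < k → ‖derivWithin η (Ici 1) k‖ ≤ k⁻¹ := by
    intro k hk
    rw [derivWithin_of_mem_nhds (Ici_mem_nhds hk)]
    exact hη2 k (le_of_lt hk)
  -- the oscillatory integral without g
  set Φ : ℝ → ℂ := fun q => ∫ k in Ioi (1:ℝ), η k * ((k ^ (-α) : ℝ) : ℂ) *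
    Complex.exp (Complex.I * ((s * Real.sqrt (k ^ 2 + m ^ 2) + k * q : ℝ) : ℂ)) with hΦ
  have hΦb : ∀ q : ℝ, ‖Φ q‖ ≤ C * t ^ (-(1 / 2 : ℝ)) := by
    intro q
    exact keyJ m α hm hα η (derivWithin η (Ici 1)) hwc hw'c hwd hη1 hw'1 t q s ht hscase
  -- notation
  set G : ℝ → ℂ := fun k => η k * ((k ^ (-α) : ℝ) : ℂ) *
    Complex.exp (Complex.I * ((s * Real.sqrt (k ^ 2 + m ^ 2) + k * p : ℝ) : ℂ)) with hGdef
  have hGi : IntegrableOn G (Ioi 1) := Gint m α s p hm hα η hwc hη1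
  -- rewrite the integrand
  have hrw : (∫ k in Set.Ioi (1:ℝ),
      η k * ((k ^ (-α) : ℝ) : ℂ) *
        Complex.exp (Complex.I * (ε * t * Real.sqrt (k ^ 2 + m ^ 2) + k * p)) * g k) =
      ∫ k in Set.Ioi (1:ℝ), G k * g k := by
    apply integral_congr_ae
    filter_upwards with k
    rw [hGdef]
    simp only
    congr 2
    rw [hs]
    push_cast
    ring
  rw [hrw]
  -- product function for Fubini
  set H : ℝ × ℝ → ℂ := fun z => G z.1 * Complex.exp (Complex.I * z.1 * z.2) * gh z.2 with hH
  set μ : Measure (ℝ × ℝ) := (volume.restrict (Ioi (1:ℝ))).prod (volume : Measure ℝ) with hμ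
  have haefst : ∀ᵐ z : ℝ × ℝ ∂μ, z.1 ∈ Ioi (1:ℝ) := by
    rw [ae_iff]
    apply measure_mono_null (t := (Ioi (1:ℝ))ᶜ ×ˢ (univ : Set ℝ))
    · intro z hz
      exact ⟨hz, mem_univ _⟩
    · have he : ((Ioi (1:ℝ))ᶜ ∩ Ioi 1) = ∅ := by
        ext x
        constructor
        · rintro ⟨h1, h2⟩; exact absurd h2 h1
        · intro h; exact absurd h (notMem_empty x)
      rw [hμ, Measure.prod_prod, Measure.restrict_apply (measurableSet_Ioi.compl), he]
      simp
  have hGc : ContinuousOn G (Ici 1) := Gcont m α s p η hwc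
  have hGnorm : ∀ k : ℝ, 1 ≤ k → ‖G k‖ ≤ k ^ (-α) := by
    intro k hk1
    have hk0 : (0:ℝ) < k := lt_of_lt_of_le one_pos hk1
    rw [hGdef]
    simp only
    rw [norm_mul, norm_mul, normE, mul_one, Complex.norm_real, Real.norm_eq_abs,
      _root_.abs_of_nonneg (Real.rpow_nonneg hk0.le _)]
    calc ‖η k‖ * k ^ (-α) ≤ 1 * k ^ (-α) :=
        mul_le_mul_of_nonneg_right (hη1 k hk1) (Real.rpow_nonneg hk0.le _)
      _ = k ^ (-α) := one_mul _
  have hHmeas : AEStronglyMeasurable H μ := by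
    apply AEStronglyMeasurable.mul
    apply AEStronglyMeasurable.mul
    · exact ((hGc.mono (Ioi_subset_Ici (le_refl 1))).aestronglyMeasurable
        measurableSet_Ioi).comp_fst
    · apply Continuous.aestronglyMeasurable
      exact Complex.continuous_exp.comp
        ((continuous_const.mul (Complex.continuous_ofReal.comp continuous_fst)).mul
          (Complex.continuous_ofReal.comp continuous_snd))
    · exact hghInt.1.comp_snd
  have hHint : Integrable H μ := by
    apply Integrable.mono'
      ((integrableOn_Ioi_rpow_of_lt (by linarith : -α < -1) one_pos).mul_prod hghInt.norm)
      hHmeas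
    filter_upwards [haefst] with z hz
    have hk1 : (1:ℝ) ≤ z.1 := le_of_lt hz
    have hk0 : (0:ℝ) < z.1 := lt_of_lt_of_le one_pos hk1
    have h2 : ‖Complex.exp (Complex.I * z.1 * z.2)‖ = 1 := by
      rw [show Complex.I * (z.1:ℂ) * (z.2:ℂ) = Complex.I * ((z.1 * z.2 : ℝ) : ℂ) by
        push_cast; ring]
      exact normE _
    rw [hH]
    simp only
    rw [norm_mul, norm_mul, h2, mul_one]
    apply mul_le_mul_of_nonneg_right (hGnorm z.1 hk1) (norm_nonneg _)
  -- decomposition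
  have hΦp : (∫ k in Ioi (1:ℝ), G k) = Φ p := rfl
  have hsplit : (∫ k in Ioi (1:ℝ), G k * g k) = c * Φ p + ∫ q : ℝ, gh q * Φ (p + q) := by
    have h1 : ∀ k : ℝ, G k * g k = c * G k + ∫ q : ℝ, H (k, q) := by
      intro k
      rw [hgRep k, mul_add, mul_comm (G k) c]
      congr 1
      rw [← integral_const_mul]
      congr 1
      funext q
      rw [hH]
      simp only
      ring
    rw [integral_congr_ae (Eventually.of_forall h1)]
    rw [integral_add (hGi.const_mul c) hHint.integral_prod_left]
    congr 1
    · rw [integral_const_mul, hΦp]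
    · have hswap := integral_integral_swap (f := fun k q => H (k, q)) (μ := volume.restrict (Ioi (1:ℝ))) (ν := volume) hHint
      rw [hswap]
      apply integral_congr_ae
      filter_upwards with q
      have hinner : (∫ k in Ioi (1:ℝ), H (k, q)) = Φ (p + q) * gh q := by
        have h3 : ∀ k : ℝ, H (k, q) = (η k * ((k ^ (-α) : ℝ) : ℂ) *
            Complex.exp (Complex.I * ((s * Real.sqrt (k ^ 2 + m ^ 2) + k * (p + q) : ℝ) : ℂ))) * gh q := by
          intro k
          rw [hH, hGdef]
          simp only
          rw [mul_assoc (η k * _) _ (Complex.exp (Complex.I * (k:ℂ) * (q:ℂ))),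
            ← Complex.exp_add]
          congr 2
          push_cast
          ring
        rw [integral_congr_ae (Eventually.of_forall h3), integral_mul_const]
      rw [hinner, mul_comm]
  rw [hsplit]
  -- final bound
  have hb1 : ‖c * Φ p‖ ≤ ‖c‖ * (C * t ^ (-(1 / 2 : ℝ))) := by
    rw [norm_mul]
    exact mul_le_mul_of_nonneg_left (hΦb p) (norm_nonneg c)
  have hb2 : ‖∫ q : ℝ, gh q * Φ (p + q)‖ ≤ (∫ q : ℝ, ‖gh q‖) * (C * t ^ (-(1 / 2 : ℝ))) := by
    refine le_trans (norm_integral_le_integral_norm _) ?_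
    have hstep : (∫ q : ℝ, ‖gh q * Φ (p + q)‖) ≤ ∫ q : ℝ, ‖gh q‖ * (C * t ^ (-(1 / 2 : ℝ))) := by
      apply integral_mono_of_nonneg
      · filter_upwards with q using norm_nonneg _
      · exact hghInt.norm.mul_const _
      · filter_upwards with q
        rw [norm_mul]
        exact mul_le_mul_of_nonneg_left (hΦb (p + q)) (norm_nonneg _)
    refine le_trans hstep ?_
    rw [integral_mul_const]
  calc ‖c * Φ p + ∫ q : ℝ, gh q * Φ (p + q)‖
      ≤ ‖c * Φ p‖ + ‖∫ q : ℝ, gh q * Φ (p + q)‖ := norm_add_le _ _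
    _ ≤ ‖c‖ * (C * t ^ (-(1 / 2 : ℝ))) + (∫ q : ℝ, ‖gh q‖) * (C * t ^ (-(1 / 2 : ℝ))) :=
        add_le_add hb1 hb2
    _ = C * (‖c‖ + ∫ q : ℝ, ‖gh q‖) * t ^ (-(1 / 2 : ℝ)) := by ring
end FinalSec
end Part3
end
end

section
/- Let V ∈ L¹₂(ℝ), x ≤ 0, and let h₋(x,k) = e^{ikx} f₋(x,k) where f₋ is the left Jost solution. Then the function k ↦ (h₋(x,k) − h₋(x,−k))/k belongs to 𝒜 with ‖(h₋(x,·) − h₋(x,−·))/·‖_𝒜 ≤ C uniformly in x ≤ 0. -/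
open MeasureTheory Complex Filter

noncomputable section

lemma eta_key (W : ℝ → ℝ) (hWm : Measurable W) (hW0 : ∀ z, 0 ≤ W z)
    (hWint : Integrable W) (hW2 : Integrable (fun z => (1 + |z|) ^ 2 * W z))
    (x : ℝ) (hx : x ≤ 0) :
    IntegrableOn (fun y => |y| * ∫ z in Set.Iio (x + y), W z) (Set.Iio 0) ∧
    (∫ y in Set.Iio 0, |y| * ∫ z in Set.Iio (x + y), W z) ≤ ∫ z, (1 + |z|) ^ 2 * W z := by
  have hηmono : Monotone (fun t => ∫ z in Set.Iio t, W z) := by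
    intro a b hab
    exact setIntegral_mono_set hWint.integrableOn
      (Eventually.of_forall fun z => hW0 z) (HasSubset.Subset.eventuallyLE (Set.Iio_subset_Iio hab))
  have hηmeas : Measurable (fun t => ∫ z in Set.Iio t, W z) := hηmono.measurable
  have hfmeas : Measurable (fun y => |y| * ∫ z in Set.Iio (x + y), W z) :=
    (measurable_abs).mul (hηmeas.comp (measurable_const.add measurable_id))
  have hf0 : ∀ y, 0 ≤ |y| * ∫ z in Set.Iio (x + y), W z := fun y =>
    mul_nonneg (abs_nonneg _) (setIntegral_nonneg measurableSet_Iio fun z _ => hW0 z)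
  -- lintegral computation
  set F : ℝ → ℝ := fun y => |y| * ∫ z in Set.Iio (x + y), W z with hF
  have key1 : ∀ y : ℝ, ENNReal.ofReal (F y)
      = ENNReal.ofReal |y| * ∫⁻ z in Set.Iio (x + y), ENNReal.ofReal (W z) := by
    intro y
    rw [hF, ENNReal.ofReal_mul (abs_nonneg _),
      ofReal_integral_eq_lintegral_ofReal hWint.integrableOn
        (Eventually.of_forall fun z => hW0 z)]
  have swap : (∫⁻ y in Set.Iio 0, ENNReal.ofReal (F y))
      = ∫⁻ z, ∫⁻ y in Set.Iio 0, (ENNReal.ofReal |y| * ((Set.Iio (x+y)).indicator (fun t => ENNReal.ofReal (W t)) z)) := by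
    rw [← lintegral_lintegral_swap]
    · refine lintegral_congr fun y => ?_
      rw [key1, ← lintegral_indicator measurableSet_Iio, lintegral_const_mul]
      exact (hWm.ennreal_ofReal).indicator measurableSet_Iio
    · apply Measurable.aemeasurable
      have : ∀ q : ℝ × ℝ, (Set.Iio (x + q.1)).indicator (fun t => ENNReal.ofReal (W t)) q.2
          = Set.indicator {q : ℝ × ℝ | q.2 < x + q.1} (fun q => ENNReal.ofReal (W q.2)) q := by
        intro q
        by_cases h : q.2 < x + q.1 <;> simp [Set.indicator, h]
      refine Measurable.mul (f := fun q : ℝ × ℝ => ENNReal.ofReal |q.1|) ?_ ?_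
      · exact (measurable_abs.comp measurable_fst).ennreal_ofReal
      · simp only [this]
        exact ((hWm.comp measurable_snd).ennreal_ofReal).indicator
          (measurableSet_lt measurable_snd (measurable_const.add measurable_fst))
  have inner_bound : ∀ z : ℝ, (∫⁻ y in Set.Iio 0,
      (ENNReal.ofReal |y| * ((Set.Iio (x+y)).indicator (fun t => ENNReal.ofReal (W t)) z)))
      ≤ ENNReal.ofReal ((1 + |z|) ^ 2 * W z) := by
    intro z
    have hrw : ∀ y : ℝ, ENNReal.ofReal |y| * (Set.Iio (x+y)).indicator (fun t => ENNReal.ofReal (W t)) z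
        = (Set.Ioi (z - x)).indicator (fun y => ENNReal.ofReal |y| * ENNReal.ofReal (W z)) y := by
      intro y
      by_cases h : z < x + y
      · rw [Set.indicator_of_mem (by simpa using h),
          Set.indicator_of_mem (by simp only [Set.mem_Ioi]; linarith)]
      · rw [Set.indicator_of_notMem (by simpa using h),
          Set.indicator_of_notMem (by simp only [Set.mem_Ioi]; intro hc; exact h (by linarith)), mul_zero]
    simp_rw [hrw]
    rw [lintegral_indicator measurableSet_Ioi, Measure.restrict_restrict measurableSet_Ioi]
    by_cases hzx : z < x
    · have hset : Set.Ioi (z - x) ∩ Set.Iio 0 = Set.Ioo (z - x) 0 := by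
        ext y; simp [Set.mem_Ioo, and_comm]
      rw [hset]
      calc (∫⁻ y in Set.Ioo (z-x) 0, ENNReal.ofReal |y| * ENNReal.ofReal (W z))
          ≤ ∫⁻ _ in Set.Ioo (z-x) 0, ENNReal.ofReal (x - z) * ENNReal.ofReal (W z) := by
            refine setLIntegral_mono' measurableSet_Ioo fun y hy => ?_
            refine mul_le_mul_left (ENNReal.ofReal_le_ofReal ?_) _
            rw [abs_of_neg hy.2]
            linarith [hy.1]
        _ = ENNReal.ofReal (x - z) * ENNReal.ofReal (W z) * ENNReal.ofReal (x - z) := by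
            rw [setLIntegral_const, Real.volume_Ioo]
            norm_num
        _ ≤ ENNReal.ofReal ((1 + |z|) ^ 2 * W z) := by
            rw [← ENNReal.ofReal_mul (by linarith), ← ENNReal.ofReal_mul
              (mul_nonneg (by linarith) (hW0 z))]
            refine ENNReal.ofReal_le_ofReal ?_
            have h1 : x - z ≤ -z := by linarith
            have h2 : |z| = -z := abs_of_neg (by linarith)
            have h3 : (0:ℝ) ≤ x - z := by linarith
            have h4 : (x - z) * (x - z) ≤ (1 + |z|) ^ 2 := by nlinarith
            have := mul_le_mul_of_nonneg_right h4 (hW0 z)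
            nlinarith [this]
    · have hset : Set.Ioi (z - x) ∩ Set.Iio 0 = ∅ := by
        ext y
        simp only [Set.mem_inter_iff, Set.mem_Ioi, Set.mem_Iio, Set.mem_empty_iff_false, iff_false]
        intro ⟨h1, h2⟩
        have : (0:ℝ) ≤ z - x := by linarith
        linarith
      rw [hset, Measure.restrict_empty, lintegral_zero_measure]
      exact zero_le
  have Lle : (∫⁻ y in Set.Iio 0, ENNReal.ofReal (F y))
      ≤ ENNReal.ofReal (∫ z, (1 + |z|) ^ 2 * W z) := by
    rw [swap]
    calc _ ≤ ∫⁻ z, ENNReal.ofReal ((1 + |z|) ^ 2 * W z) := lintegral_mono inner_bound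
    _ = ENNReal.ofReal (∫ z, (1 + |z|) ^ 2 * W z) := by
        rw [ofReal_integral_eq_lintegral_ofReal hW2 (Eventually.of_forall fun z =>
          mul_nonneg (by positivity) (hW0 z))]
  have hLfin : (∫⁻ y in Set.Iio 0, ENNReal.ofReal (F y)) < ⊤ :=
    lt_of_le_of_lt Lle ENNReal.ofReal_lt_top
  have hint : IntegrableOn F (Set.Iio 0) := by
    refine ⟨hfmeas.aestronglyMeasurable, ?_⟩
    rw [hasFiniteIntegral_iff_ofReal (Eventually.of_forall fun y => hf0 y)]
    exact hLfin
  refine ⟨hint, ?_⟩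
  rw [integral_eq_lintegral_of_nonneg_ae (Eventually.of_forall fun y => hf0 y)
    hfmeas.aestronglyMeasurable]
  have : (∫⁻ y in Set.Iio 0, ENNReal.ofReal (F y)).toReal
      ≤ (ENNReal.ofReal (∫ z, (1 + |z|) ^ 2 * W z)).toReal :=
    ENNReal.toReal_mono ENNReal.ofReal_ne_top Lle
  refine this.trans ?_
  rw [ENNReal.toReal_ofReal]
  exact integral_nonneg fun z => mul_nonneg (by positivity) (hW0 z)

set_option maxHeartbeats 1000000 in
/-- let `V ∈ L¹₂(ℝ)` and let `B₋(x,y)` be the transformation operator kernel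
of the left Jost solution, satisfying `|B₋(x,y)| ≤ e^{γ₋(x)} η₋(x+y)` with
`γ₋(x) = ∫_{−∞}^x (x−z)|V(z)|dz` and `η₋(x) = ∫_{−∞}^x |V(z)|dz`, so that
`h₋(x,k) = 1 + ∫_{−∞}^0 B₋(x,y) e^{−2iky} dy`.  Then for `x ≤ 0` the difference quotient
`k ↦ (h₋(x,k) − h₋(x,−k))/k` belongs to the Wiener algebra `𝒜` with `𝒜`-norm bounded
uniformly in `x ≤ 0`. -/
theorem h_minus_difference_quotient_in_wiener
    (V : ℝ → ℝ) (hV : Integrable (fun x => (1 + |x|) ^ 2 * |V x|))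
    (B : ℝ → ℝ → ℝ)
    (hBmeas : ∀ x : ℝ, IntegrableOn (fun y => B x y) (Set.Iio 0))
    (hB : ∀ x y : ℝ, |B x y| ≤
      Real.exp (∫ z in Set.Iio x, (x - z) * |V z|) * ∫ z in Set.Iio (x + y), |V z|) :
    ∃ C : ℝ, ∀ x : ℝ, x ≤ 0 →
      ∃ g : ℝ → ℂ, Integrable g ∧
        (∀ k : ℝ, k ≠ 0 →
          (((1 + ∫ y in Set.Iio (0:ℝ),
                (B x y : ℂ) * Complex.exp (-2 * Complex.I * k * y)) -
             (1 + ∫ y in Set.Iio (0:ℝ),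
                (B x y : ℂ) * Complex.exp (-2 * Complex.I * (-k) * y))) / k) =
            ∫ p : ℝ, Complex.exp (Complex.I * k * p) * g p) ∧
        (∫ p : ℝ, ‖g p‖) ≤ C := by
  classical
  -- measurable nonnegative version of |V|
  have habs : AEStronglyMeasurable (fun z => |V z|) volume := by
    have h1 : Continuous fun z : ℝ => ((1 + |z|) ^ 2)⁻¹ :=
      ((continuous_const.add _root_.continuous_abs).pow 2).inv₀ (fun z => (by positivity : (1 + |z|) ^ 2 ≠ 0))
    refine (h1.aestronglyMeasurable.mul hV.aestronglyMeasurable).congr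
      (Eventually.of_forall fun z => ?_)
    simp only [Pi.mul_apply]
    rw [inv_mul_cancel_left₀ (by positivity)]
  set W : ℝ → ℝ := fun z => max (habs.mk _ z) 0 with hWdef
  have hWm : Measurable W :=
    (habs.stronglyMeasurable_mk.measurable).max measurable_const
  have hWeq : (fun z => |V z|) =ᵐ[volume] W := habs.ae_eq_mk.mono fun z hz => by
    rw [hWdef]; simp only; rw [← hz, max_eq_left (abs_nonneg _)]
  have hW0 : ∀ z, 0 ≤ W z := fun z => le_max_right _ _
  have hVabs : Integrable (fun z => |V z|) volume := by
    refine hV.mono' habs (Eventually.of_forall fun z => ?_)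
    rw [Real.norm_eq_abs, _root_.abs_abs]
    nlinarith [mul_nonneg (abs_nonneg z) (abs_nonneg (V z)), mul_nonneg (mul_nonneg (abs_nonneg z) (abs_nonneg z)) (abs_nonneg (V z))]
  have hWint : Integrable W volume := hVabs.congr hWeq
  have hW2 : Integrable (fun z => (1 + |z|) ^ 2 * W z) volume :=
    hV.congr (hWeq.mono fun z hz => by
      have hz' : |V z| = W z := hz
      simp only; rw [hz'])
  set M0 : ℝ := ∫ z, (1 + |z|) ^ 2 * |V z| with hM0def
  have hM0W : M0 = ∫ z, (1 + |z|) ^ 2 * W z :=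
    integral_congr_ae (hWeq.mono fun z hz => by
      have hz' : |V z| = W z := hz
      simp only; rw [hz'])
  have hM00 : 0 ≤ M0 := by
    rw [hM0W]; exact integral_nonneg fun z => mul_nonneg (by positivity) (hW0 z)
  have hηeq : ∀ t : ℝ, (∫ z in Set.Iio t, |V z|) = ∫ z in Set.Iio t, W z :=
    fun t => integral_congr_ae (ae_restrict_of_ae hWeq)
  refine ⟨4 * Real.exp M0 * M0, ?_⟩
  intro x hx
  obtain ⟨hetaInt0, hetaBnd0⟩ := eta_key W hWm hW0 hWint hW2 x hx
  rw [← hM0W] at hetaBnd0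
  set η : ℝ → ℝ := fun t => ∫ z in Set.Iio t, W z with hηdef
  have hetaInt : IntegrableOn (fun y => |y| * η (x + y)) (Set.Iio 0) volume := hetaInt0
  have hetaBnd : (∫ y in Set.Iio 0, |y| * η (x + y)) ≤ M0 := hetaBnd0
  have hη0 : ∀ t, 0 ≤ η t := fun t => setIntegral_nonneg measurableSet_Iio fun z _ => hW0 z
  set Kx : ℝ := Real.exp (∫ z in Set.Iio x, (x - z) * |V z|) with hKxdef
  have hKx0 : 0 < Kx := Real.exp_pos _
  have hKxle : Kx ≤ Real.exp M0 := by
    refine Real.exp_le_exp.2 ?_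
    have hle1 : (∫ z in Set.Iio x, (x - z) * |V z|)
        ≤ ∫ z in Set.Iio x, (1 + |z|) ^ 2 * |V z| := by
      refine integral_mono_of_nonneg ?_ hV.integrableOn ?_
      · refine (ae_restrict_iff' measurableSet_Iio).2 (Eventually.of_forall fun z hz => ?_)
        exact mul_nonneg (by simp only [Set.mem_Iio] at hz; linarith) (abs_nonneg _)
      · refine (ae_restrict_iff' measurableSet_Iio).2 (Eventually.of_forall fun z hz => ?_)
        simp only [Set.mem_Iio] at hz
        have h2 : x - z ≤ |z| := by rw [abs_of_neg (by linarith)]; linarith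
        have h3 : |z| ≤ (1 + |z|) ^ 2 := by nlinarith [abs_nonneg z]
        exact mul_le_mul_of_nonneg_right (h2.trans h3) (abs_nonneg _)
    exact hle1.trans (setIntegral_le_integral hV
      (Eventually.of_forall fun z => mul_nonneg (by positivity) (abs_nonneg _)))
  have hBbound : ∀ y, |B x y| ≤ Kx * η (x + y) := fun y => by
    rw [hKxdef, hηdef]; simpa [hηeq] using hB x y
  set μ : Measure ℝ := volume.restrict (Set.Iio 0) with hμdef
  obtain ⟨Bm, hBmSM, hBmeq⟩ : ∃ Bm : ℝ → ℝ, StronglyMeasurable Bm ∧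
      (fun y => B x y) =ᵐ[μ] Bm :=
    ⟨_, (hBmeas x).aestronglyMeasurable.stronglyMeasurable_mk,
      (hBmeas x).aestronglyMeasurable.ae_eq_mk⟩
  have hBmBound : ∀ᵐ y ∂μ, |Bm y| ≤ Kx * η (x + y) :=
    hBmeq.mono fun y hy => by rw [← hy]; exact hBbound y
  -- integrability of |Bm y| * (4 * |y|) on Iio 0
  have hyInt : Integrable (fun y => |Bm y| * (4 * |y|)) μ := by
    refine Integrable.mono' ((hetaInt.const_mul (4 * Kx))) ?_ ?_
    · exact (hBmSM.measurable.abs.mul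
        ((measurable_abs).const_mul 4)).aestronglyMeasurable
    · filter_upwards [hBmBound] with y hy
      show ‖|Bm y| * (4 * |y|)‖ ≤ 4 * Kx * (|y| * η (x + y))
      rw [Real.norm_eq_abs, _root_.abs_of_nonneg (mul_nonneg (abs_nonneg _)
        (by positivity))]
      calc |Bm y| * (4 * |y|) ≤ (Kx * η (x + y)) * (4 * |y|) :=
            mul_le_mul_of_nonneg_right hy (by positivity)
        _ = 4 * Kx * (|y| * η (x + y)) := by ring
  -- the product set and kernel
  set S : Set (ℝ × ℝ) := {q : ℝ × ℝ | 2 * q.1 < q.2 ∧ q.2 ≤ -(2 * q.1)} with hSdef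
  have hSmeas : MeasurableSet S :=
    (measurableSet_lt (measurable_fst.const_mul 2) measurable_snd).inter
      (measurableSet_le measurable_snd (measurable_fst.const_mul 2).neg)
  set F : ℝ × ℝ → ℝ := S.indicator (fun q => Bm q.1) with hFdef
  have hFmeas : Measurable F :=
    (hBmSM.measurable.comp measurable_fst).indicator hSmeas
  -- sections of F in p
  have hFy : ∀ y : ℝ, (fun p => F (y, p))
      = (Set.Ioc (2 * y) (-(2 * y))).indicator (fun _ => Bm y) := by
    intro y; funext p
    by_cases h : p ∈ Set.Ioc (2 * y) (-(2 * y))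
    · rw [hFdef, Set.indicator_of_mem (by exact h) (fun q : ℝ × ℝ => Bm q.1),
        Set.indicator_of_mem h]
    · rw [hFdef, Set.indicator_of_notMem (by exact h) (fun q : ℝ × ℝ => Bm q.1),
        Set.indicator_of_notMem h]
  -- the norm integral in p
  have hnormint : ∀ᵐ y ∂μ, (∫ p, ‖F (y, p)‖) = |Bm y| * (4 * |y|) := by
    filter_upwards [self_mem_ae_restrict (measurableSet_Iio : MeasurableSet (Set.Iio (0:ℝ)))]
      with y hy
    simp only [Set.mem_Iio] at hy
    have : (fun p => ‖F (y, p)‖)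
        = (Set.Ioc (2 * y) (-(2 * y))).indicator (fun _ => |Bm y|) := by
      funext p
      rw [congrFun (hFy y) p]
      by_cases h : p ∈ Set.Ioc (2 * y) (-(2 * y)) <;>
        simp [Set.indicator, h, Real.norm_eq_abs]
    rw [this, integral_indicator_const _ measurableSet_Ioc]
    rw [measureReal_def, Real.volume_Ioc, smul_eq_mul]
    rw [ENNReal.toReal_ofReal (by linarith)]
    rw [abs_of_neg hy]
    ring
  have hFint : Integrable F (μ.prod volume) := by
    refine (integrable_prod_iff hFmeas.aestronglyMeasurable).2 ⟨?_, ?_⟩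
    · refine Eventually.of_forall fun y => ?_
      rw [hFy y]
      rw [integrable_indicator_iff measurableSet_Ioc]
      exact integrableOn_const measure_Ioc_lt_top.ne
    · exact hyInt.congr (hnormint.mono fun y hy => hy.symm)
  -- the function g
  set g : ℝ → ℂ := fun p => Complex.I * ((∫ y in Set.Iio (-|p| / 2), B x y : ℝ) : ℂ)
    with hgdef
  -- connection between g and F
  have hgF : ∀ p : ℝ, p ≠ 0 →
      (∫ y, F (y, p) ∂μ) = ∫ y in Set.Iio (-|p| / 2), B x y := by
    intro p hp
    have hTmeas : MeasurableSet (Set.Iio (p/2) ∩ Set.Iic (-(p/2))) :=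
      measurableSet_Iio.inter measurableSet_Iic
    have hsec : (fun y => F (y, p)) = (Set.Iio (p/2) ∩ Set.Iic (-(p/2))).indicator Bm := by
      funext y
      by_cases h : (y, p) ∈ S
      · have hS' : 2 * y < p ∧ p ≤ -(2 * y) := h
        have h' : y ∈ Set.Iio (p/2) ∩ Set.Iic (-(p/2)) := by
          refine ⟨?_, ?_⟩
          · simp only [Set.mem_Iio]; linarith [hS'.1]
          · simp only [Set.mem_Iic]; linarith [hS'.2]
        rw [hFdef, Set.indicator_of_mem h, Set.indicator_of_mem h']
      · have h' : y ∉ Set.Iio (p/2) ∩ Set.Iic (-(p/2)) := by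
          intro hc
          simp only [Set.mem_inter_iff, Set.mem_Iio, Set.mem_Iic] at hc
          exact h (show 2 * y < p ∧ p ≤ -(2 * y) by constructor <;> linarith [hc.1, hc.2])
        rw [hFdef, Set.indicator_of_notMem h, Set.indicator_of_notMem h']
    have hsub : Set.Iio (-|p| / 2) ⊆ Set.Iio 0 := Set.Iio_subset_Iio
      (by have := abs_nonneg p; linarith)
    have hBeq' : ∀ᵐ y ∂(volume.restrict (Set.Iio (-|p| / 2))), B x y = Bm y :=
      ae_restrict_of_ae_restrict_of_subset hsub hBmeq
    rw [show (∫ y in Set.Iio (-|p| / 2), B x y) = ∫ y in Set.Iio (-|p| / 2), Bm y from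
      integral_congr_ae hBeq']
    rw [hsec, integral_indicator hTmeas, hμdef, Measure.restrict_restrict hTmeas]
    rcases lt_or_gt_of_ne hp with hneg | hpos
    · have habsp : -|p| / 2 = p / 2 := by rw [abs_of_neg hneg]; ring
      have hset : Set.Iio (p/2) ∩ Set.Iic (-(p/2)) ∩ Set.Iio 0 = Set.Iio (p/2) := by
        ext y
        simp only [Set.mem_inter_iff, Set.mem_Iio, Set.mem_Iic]
        constructor
        · rintro ⟨⟨h1, _⟩, _⟩; exact h1
        · intro h1; exact ⟨⟨h1, by linarith⟩, by linarith⟩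
      rw [hset, habsp]
    · have habsp : -|p| / 2 = -(p / 2) := by rw [abs_of_pos hpos]; ring
      have hset : Set.Iio (p/2) ∩ Set.Iic (-(p/2)) ∩ Set.Iio 0 = Set.Iic (-(p/2)) := by
        ext y
        simp only [Set.mem_inter_iff, Set.mem_Iio, Set.mem_Iic]
        constructor
        · rintro ⟨⟨_, h2⟩, _⟩; exact h2
        · intro h1; exact ⟨⟨by linarith, h1⟩, by linarith⟩
      rw [hset, habsp]
      exact (setIntegral_congr_set (Iio_ae_eq_Iic (a := -(p/2)))).symm
  have hae0 : ∀ᵐ p : ℝ ∂(volume : Measure ℝ), p ≠ 0 := by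
    have : {p : ℝ | ¬ p ≠ 0} = {0} := by ext p; simp
    rw [ae_iff, this]; exact measure_singleton 0
  have h1 : Integrable (fun p => ∫ y, F (y, p) ∂μ) volume := hFint.integral_prod_right
  have hgInt : Integrable g volume := by
    refine ((h1.ofReal (𝕜 := ℂ)).const_mul Complex.I).congr ?_
    filter_upwards [hae0] with p hp
    show Complex.I * ((∫ y, F (y, p) ∂μ : ℝ) : ℂ) = g p
    rw [hgF p hp]
  refine ⟨g, hgInt, ?_, ?_⟩
  · -- the Fourier identity
    intro k hk
    have hknz : (k : ℂ) ≠ 0 := Complex.ofReal_ne_zero.2 hk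
    have hik : Complex.I * (k : ℂ) ≠ 0 := mul_ne_zero Complex.I_ne_zero hknz
    have hexpnorm : ∀ t y : ℝ, ‖Complex.exp (-2 * Complex.I * (t:ℂ) * (y:ℂ))‖ = 1 := by
      intro t y
      have harg : (-2 * Complex.I * (t:ℂ) * (y:ℂ)) = ((-2 * t * y : ℝ) : ℂ) * Complex.I := by
        push_cast; ring
      rw [harg, Complex.norm_exp_ofReal_mul_I]
    have hAint : ∀ t : ℝ, Integrable
        (fun y => (B x y : ℂ) * Complex.exp (-2 * Complex.I * (t:ℂ) * (y:ℂ))) μ := by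
      intro t
      have hbase : Integrable (fun y => (B x y : ℂ)) μ := (hBmeas x).ofReal
      have hexp : AEStronglyMeasurable
          (fun y : ℝ => Complex.exp (-2 * Complex.I * (t:ℂ) * (y:ℂ))) μ :=
        (Complex.continuous_exp.comp
          (continuous_const.mul Complex.continuous_ofReal)).aestronglyMeasurable
      refine (hbase.bdd_mul (c := 1) hexp (Eventually.of_forall fun y => (hexpnorm t y).le)).congr
        (Eventually.of_forall fun y => mul_comm _ _)
    have hsub : (∫ y, (B x y : ℂ) * Complex.exp (-2 * Complex.I * (k:ℝ) * y) ∂μ) -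
        (∫ y, (B x y : ℂ) * Complex.exp (-2 * Complex.I * ((-k : ℝ) : ℂ) * y) ∂μ)
        = ∫ y, (B x y : ℂ) * (Complex.exp (-2 * Complex.I * (k:ℝ) * y)
            - Complex.exp (-2 * Complex.I * ((-k : ℝ) : ℂ) * y)) ∂μ := by
      rw [← integral_sub (hAint k) (hAint (-k))]
      exact integral_congr_ae (Eventually.of_forall fun y => (mul_sub _ _ _).symm)
    have hptw : ∀ y : ℝ, Complex.exp (-2 * Complex.I * (k:ℝ) * y)
        - Complex.exp (-2 * Complex.I * ((-k : ℝ) : ℂ) * y)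
        = (Complex.I * (k:ℂ)) * ∫ p in (2*y)..(-(2*y)), Complex.exp (Complex.I * (k:ℂ) * p) := by
      intro y
      rw [integral_exp_mul_complex hik, mul_comm (Complex.I * (k:ℂ)), div_mul_cancel₀ _ hik]
      have h1 : (-2 * Complex.I * ((k:ℝ):ℂ) * ((y:ℝ):ℂ))
          = (Complex.I * (k:ℂ)) * (((-(2*y)) : ℝ) : ℂ) := by push_cast; ring
      have h2 : (-2 * Complex.I * ((-k : ℝ) : ℂ) * ((y:ℝ):ℂ))
          = (Complex.I * (k:ℂ)) * (((2*y) : ℝ) : ℂ) := by push_cast; ring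
      rw [h1, h2]
    have hQ : ((∫ y, (B x y : ℂ) * Complex.exp (-2 * Complex.I * (k:ℝ) * y) ∂μ) -
        (∫ y, (B x y : ℂ) * Complex.exp (-2 * Complex.I * ((-k : ℝ) : ℂ) * y) ∂μ)) / (k : ℂ)
        = ∫ y, (B x y : ℂ) * Complex.I *
            (∫ p in (2*y)..(-(2*y)), Complex.exp (Complex.I * (k:ℂ) * p)) ∂μ := by
      rw [hsub, div_eq_iff hknz, ← integral_mul_const]
      refine integral_congr_ae (Eventually.of_forall fun y => ?_)
      simp only
      rw [hptw y]; ring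
    have hGint : Integrable (fun q : ℝ × ℝ =>
        Complex.I * Complex.exp (Complex.I * (k:ℂ) * q.2) * ((F q : ℝ) : ℂ)) (μ.prod volume) := by
      refine (hFint.ofReal (𝕜 := ℂ)).bdd_mul (c := 1) ?_ (Eventually.of_forall fun q => ?_)
      · exact ((continuous_const.mul (Complex.continuous_exp.comp
          (continuous_const.mul (Complex.continuous_ofReal.comp
            continuous_snd))))).aestronglyMeasurable
      · have harg : (Complex.I * (k:ℂ) * (q.2:ℂ)) = (((k * q.2) : ℝ) : ℂ) * Complex.I := by
          push_cast; ring
        rw [norm_mul, Complex.norm_I, one_mul, harg,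
          Complex.norm_exp_ofReal_mul_I]
    have hyEq : ∀ᵐ y ∂μ, (B x y : ℂ) * Complex.I *
        (∫ p in (2*y)..(-(2*y)), Complex.exp (Complex.I * (k:ℂ) * p))
        = ∫ p : ℝ, Complex.I * Complex.exp (Complex.I * (k:ℂ) * (p:ℂ)) * ((F (y, p) : ℝ) : ℂ) := by
      filter_upwards [hBmeq, self_mem_ae_restrict
        (measurableSet_Iio : MeasurableSet (Set.Iio (0:ℝ)))] with y hyB hy
      simp only [Set.mem_Iio] at hy
      have hyB' : B x y = Bm y := hyB
      have h2y : 2 * y ≤ -(2 * y) := by linarith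
      rw [intervalIntegral.integral_of_le h2y, ← integral_indicator measurableSet_Ioc,
        hyB', ← integral_const_mul]
      refine integral_congr_ae (Eventually.of_forall fun p => ?_)
      simp only
      rw [congrFun (hFy y) p]
      by_cases hmem : p ∈ Set.Ioc (2*y) (-(2*y))
      · rw [Set.indicator_of_mem hmem, Set.indicator_of_mem hmem]; ring
      · rw [Set.indicator_of_notMem hmem, Set.indicator_of_notMem hmem]
        simp
    have hswap := integral_integral_swap (f := fun (y p : ℝ) =>
      Complex.I * Complex.exp (Complex.I * (k:ℂ) * (p:ℂ)) * ((F (y, p) : ℝ) : ℂ)) hGint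
    have hinner : ∀ᵐ (p : ℝ) ∂(volume : Measure ℝ),
        (∫ y, Complex.I * Complex.exp (Complex.I * (k:ℂ) * (p:ℂ)) * ((F (y, p) : ℝ) : ℂ) ∂μ)
        = Complex.exp (Complex.I * (k:ℂ) * (p:ℂ)) * g p := by
      filter_upwards [hae0] with p hp
      rw [integral_const_mul,
        show (∫ y, ((F (y, p) : ℝ) : ℂ) ∂μ) = ((∫ y, F (y, p) ∂μ : ℝ) : ℂ) from
          integral_ofReal (𝕜 := ℂ), hgF p hp, hgdef]
      ring
    calc ((1 + ∫ y, (B x y : ℂ) * Complex.exp (-2 * Complex.I * (k:ℝ) * y) ∂μ) -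
          (1 + ∫ y, (B x y : ℂ) * Complex.exp (-2 * Complex.I * (-(k:ℂ)) * y) ∂μ)) / (k : ℂ)
        = ((∫ y, (B x y : ℂ) * Complex.exp (-2 * Complex.I * (k:ℝ) * y) ∂μ) -
          (∫ y, (B x y : ℂ) * Complex.exp (-2 * Complex.I * ((-k : ℝ) : ℂ) * y) ∂μ)) / (k : ℂ) := by
          push_cast
          ring
      _ = ∫ y, (B x y : ℂ) * Complex.I *
            (∫ p in (2*y)..(-(2*y)), Complex.exp (Complex.I * (k:ℂ) * p)) ∂μ := hQ
      _ = ∫ y, (∫ p : ℝ, Complex.I * Complex.exp (Complex.I * (k:ℂ) * (p:ℂ)) * ((F (y, p) : ℝ) : ℂ)) ∂μ :=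
          integral_congr_ae hyEq
      _ = ∫ p : ℝ, (∫ y, Complex.I * Complex.exp (Complex.I * (k:ℂ) * (p:ℂ)) * ((F (y, p) : ℝ) : ℂ) ∂μ) :=
          hswap
      _ = ∫ p : ℝ, Complex.exp (Complex.I * (k:ℂ) * (p:ℂ)) * g p := integral_congr_ae hinner
  · -- norm bound
    have hnormF : Integrable (fun p => ∫ y, ‖F (y, p)‖ ∂μ) volume :=
      hFint.norm.integral_prod_right
    have step1 : (∫ p, ‖g p‖) ≤ ∫ p, ∫ y, ‖F (y, p)‖ ∂μ := by
      refine integral_mono_ae hgInt.norm hnormF ?_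
      filter_upwards [hae0] with p hp
      have hval : ‖g p‖ = ‖∫ y, F (y, p) ∂μ‖ := by
        rw [hgdef]; simp only
        rw [← hgF p hp, norm_mul, Complex.norm_I, one_mul, Complex.norm_real]
      rw [hval]
      exact norm_integral_le_integral_norm _
    have step2 : (∫ p, ∫ y, ‖F (y, p)‖ ∂μ) = ∫ y, (∫ p, ‖F (y, p)‖) ∂μ :=
      (integral_integral_swap (f := fun y p => ‖F (y, p)‖) hFint.norm).symm
    have step3 : (∫ y, (∫ p, ‖F (y, p)‖) ∂μ) = ∫ y, |Bm y| * (4 * |y|) ∂μ :=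
      integral_congr_ae hnormint
    have step4 : (∫ y, |Bm y| * (4 * |y|) ∂μ) ≤ ∫ y, 4 * Kx * (|y| * η (x + y)) ∂μ := by
      refine integral_mono_ae hyInt (hetaInt.const_mul (4 * Kx)) ?_
      filter_upwards [hBmBound] with y hy
      calc |Bm y| * (4 * |y|) ≤ (Kx * η (x + y)) * (4 * |y|) :=
            mul_le_mul_of_nonneg_right hy (by positivity)
        _ = 4 * Kx * (|y| * η (x + y)) := by ring
    have step5 : (∫ y, 4 * Kx * (|y| * η (x + y)) ∂μ) = 4 * Kx * ∫ y, |y| * η (x + y) ∂μ :=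
      integral_const_mul _ _
    have hT0 : 0 ≤ ∫ y, |y| * η (x + y) ∂μ :=
      integral_nonneg fun y => mul_nonneg (abs_nonneg _) (hη0 _)
    calc (∫ p, ‖g p‖) ≤ ∫ y, (∫ p, ‖F (y, p)‖) ∂μ := step1.trans_eq step2
      _ = ∫ y, |Bm y| * (4 * |y|) ∂μ := step3
      _ ≤ 4 * Kx * ∫ y, |y| * η (x + y) ∂μ := step4.trans_eq step5
      _ ≤ 4 * Real.exp M0 * M0 := by
          nlinarith [mul_nonneg (sub_nonneg.2 hKxle) hM00,
            mul_nonneg hKx0.le (sub_nonneg.2 hetaBnd)]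
end
end
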